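/- arXiv:1811.01077 — 10 statements merged into one kernel-verified Lean document; each statement's English description precedes it below -/
import Mathlib

section
/- Let p > 0 and c ≥ 0 be real numbers and let w, x, y, z be nonnegative reals with x ≥ w and z ≥ y. Let J : ℝ → ℝ be differentiable with J(0) = 0, with 0 ≤ J'(u) ≤ p for all u ≥ 0, and with J concave on [0, ∞). Then 0 ≤ −p·min(c, w+y) + p·min(c, w+z) + p·min(c, x+y) − p·min(c, x+z) − J((c−w−y)⁺) + J((c−w−z)⁺) + J((c−x−y)⁺) − J((c−x−z)⁺). -/
/-- Auxiliary: for a convex function on `[0, ∞)`, increments are superadditive: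
if `0 ≤ a ≤ b ≤ d`, `a ≤ c ≤ d` and `a + d = b + c` then `K b + K c ≤ K a + K d`. -/
lemma convex_four_point (K : ℝ → ℝ) (hK : ConvexOn ℝ (Set.Ici (0 : ℝ)) K)
    (a b c d : ℝ) (ha : 0 ≤ a) (hab : a ≤ b) (hac : a ≤ c) (hbd : b ≤ d) (hcd : c ≤ d)
    (hsum : a + d = b + c) : K b + K c ≤ K a + K d := by
  rcases eq_or_lt_of_le (hab.trans hbd) with h | h
  · have hb : b = a := le_antisymm (by linarith) hab
    have hc : c = a := le_antisymm (by linarith) hac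
    rw [hb, hc, ← h]
  · set lam := (d - b) / (d - a) with hlam
    set mu := (d - c) / (d - a) with hmu
    have hda : 0 < d - a := by linarith
    have hlam0 : 0 ≤ lam := div_nonneg (by linarith) hda.le
    have hmu0 : 0 ≤ mu := div_nonneg (by linarith) hda.le
    have hlm : lam + mu = 1 := by
      rw [hlam, hmu, ← add_div, div_eq_one_iff_eq (ne_of_gt hda)]
      linarith
    have hb : lam • a + mu • d = b := by
      simp only [smul_eq_mul, hlam, hmu]
      field_simp
      ring_nf
      nlinarith [hsum]
    have hcc : mu • a + lam • d = c := by
      simp only [smul_eq_mul, hlam, hmu]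
      field_simp
      ring_nf
      nlinarith [hsum]
    have h1 := hK.2 (Set.mem_Ici.mpr ha) (Set.mem_Ici.mpr (ha.trans (hab.trans hbd)))
      hlam0 hmu0 hlm
    have h2 := hK.2 (Set.mem_Ici.mpr ha) (Set.mem_Ici.mpr (ha.trans (hab.trans hbd)))
      hmu0 hlam0 (by linarith)
    rw [hb] at h1
    rw [hcc] at h2
    simp only [smul_eq_mul] at h1 h2
    have e1 : lam * K a + mu * K a = K a := by rw [← add_mul, hlm, one_mul]
    have e2 : lam * K d + mu * K d = K d := by rw [← add_mul, hlm, one_mul]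
    linarith

/-- Let `p > 0` and `c ≥ 0` be real numbers and let `w, x, y, z` be nonnegative
reals with `x ≥ w` and `z ≥ y`. Let `J : ℝ → ℝ` be differentiable with `J 0 = 0`, with
`0 ≤ J' u ≤ p` for all `u ≥ 0`, and with `J` concave on `[0, ∞)`. Then
`0 ≤ −p·min(c, w+y) + p·min(c, w+z) + p·min(c, x+y) − p·min(c, x+z)
   − J((c−w−y)⁺) + J((c−w−z)⁺) + J((c−x−y)⁺) − J((c−x−z)⁺)`. -/
theorem stmt_0 (p c w x y z : ℝ) (hp : 0 < p) (hc : 0 ≤ c)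
    (hw : 0 ≤ w) (hx : 0 ≤ x) (hy : 0 ≤ y) (hz : 0 ≤ z)
    (hwx : w ≤ x) (hyz : y ≤ z)
    (J : ℝ → ℝ) (hJdiff : Differentiable ℝ J) (hJ0 : J 0 = 0)
    (hJ'nonneg : ∀ u : ℝ, 0 ≤ u → 0 ≤ deriv J u)
    (hJ'le : ∀ u : ℝ, 0 ≤ u → deriv J u ≤ p)
    (hJconc : ConcaveOn ℝ (Set.Ici (0 : ℝ)) J) :
    0 ≤ -p * min c (w + y) + p * min c (w + z)
      + p * min c (x + y) - p * min c (x + z)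
      - J (max (c - w - y) 0) + J (max (c - w - z) 0)
      + J (max (c - x - y) 0) - J (max (c - x - z) 0) := by
  set A := max (c - w - y) 0 with hA
  set B := max (c - w - z) 0 with hB
  set C := max (c - x - y) 0 with hC
  set D := max (c - x - z) 0 with hD
  have hD0 : (0:ℝ) ≤ D := le_max_right _ _
  have hDB : D ≤ B := max_le_max (by linarith) le_rfl
  have hDC : D ≤ C := max_le_max (by linarith) le_rfl
  have hBA : B ≤ A := max_le_max (by linarith) le_rfl
  have hCA : C ≤ A := max_le_max (by linarith) le_rfl
  have hA0 : (0:ℝ) ≤ A := le_max_right _ _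
  have hkey : B + C ≤ A + D := by
    rw [hA, hB, hC, hD]
    rw [max_def, max_def, max_def, max_def]
    split_ifs <;> linarith
  -- K u = p * u - J u is convex and monotone on [0, ∞)
  set K : ℝ → ℝ := fun u => p * u - J u with hK
  have hKconv : ConvexOn ℝ (Set.Ici (0:ℝ)) K := by
    have h1 : ConvexOn ℝ (Set.Ici (0:ℝ)) (fun u : ℝ => p * u) := by
      have := (convexOn_id (convex_Ici (0:ℝ))).smul hp.le
      simpa [smul_eq_mul] using this
    exact h1.sub hJconc
  have hKderiv : ∀ u : ℝ, deriv K u = p - deriv J u := by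
    intro u
    have h1 : HasDerivAt K (p * 1 - deriv J u) u :=
      ((hasDerivAt_id u).const_mul p).sub (hJdiff u).hasDerivAt
    simpa using h1.deriv
  have hKdiff : Differentiable ℝ K := by
    intro u
    exact ((differentiable_id.const_mul p).sub hJdiff) u
  have hKmono : MonotoneOn K (Set.Ici (0:ℝ)) := by
    apply monotoneOn_of_deriv_nonneg (convex_Ici 0) hKdiff.continuous.continuousOn
      (hKdiff.differentiableOn)
    intro u hu
    rw [interior_Ici] at hu
    rw [hKderiv u]
    have := hJ'le u (le_of_lt hu)
    linarith
  -- Apply the four-point convexity inequality with a = D, d = B + C - D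
  have hmain : K B + K C ≤ K D + K (B + C - D) := by
    have := convex_four_point K hKconv D B C (B + C - D) hD0 hDB hDC
      (by linarith) (by linarith) (by ring)
    linarith
  have hmono : K (B + C - D) ≤ K A :=
    hKmono (Set.mem_Ici.mpr (by linarith)) (Set.mem_Ici.mpr hA0) (by linarith)
  have hfinal : K B + K C ≤ K D + K A := by linarith
  -- Rewrite the mins
  have hm1 : min c (w + y) = c - A := by
    rw [hA, min_def, max_def]; split_ifs <;> linarith
  have hm2 : min c (w + z) = c - B := by
    rw [hB, min_def, max_def]; split_ifs <;> linarith
  have hm3 : min c (x + y) = c - C := by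
    rw [hC, min_def, max_def]; split_ifs <;> linarith
  have hm4 : min c (x + z) = c - D := by
    rw [hD, min_def, max_def]; split_ifs <;> linarith
  rw [hm1, hm2, hm3, hm4]
  have hexpand : -p * (c - A) + p * (c - B) + p * (c - C) - p * (c - D)
      - J A + J B + J C - J D
      = (K A + K D) - (K B + K C) := by
    simp only [hK]; ring
  rw [hexpand]
  linarith
end

section
/- Let c > 0 be a real number, T a positive integer, and p ∈ [0,1]. Let X_1, …, X_T be i.i.d. random variables taking values in [0,1] with E[X_t] = p for all t, and let Y_1, …, Y_T be i.i.d. Bernoulli random variables with success probability p. Then E[min(c, Σ_{t=1}^T X_t)] ≥ E[min(c, Σ_{t=1}^T Y_t)]. -/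
open MeasureTheory ProbabilityTheory

noncomputable def iterA (c : ℝ) (ρ : Measure ℝ) : ℕ → ℝ → ℝ
  | 0 => fun s => min c s
  | (k+1) => fun s => ∫ x, iterA c ρ k (s + x) ∂ρ

section aux

variable {c : ℝ} {ρ : Measure ℝ} [IsProbabilityMeasure ρ]

lemma integ_shift (hsupp : ∀ᵐ x ∂ρ, x ∈ Set.Icc (0:ℝ) 1) {f : ℝ → ℝ}
    (hf : LipschitzWith 1 f) (s : ℝ) : Integrable (fun x => f (s + x)) ρ := by
  refine (integrable_const (‖f s‖ + 1)).mono' ?_ ?_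
  · exact (hf.continuous.comp (continuous_const.add continuous_id)).aestronglyMeasurable
  · filter_upwards [hsupp] with x hx
    have h1 : |f (s + x) - f s| ≤ |x| := by
      have := hf.dist_le_mul (s + x) s
      simpa [Real.dist_eq, abs_sub_comm] using this
    have h2 : |x| ≤ 1 := abs_le.2 ⟨by linarith [hx.1], hx.2⟩
    calc ‖f (s + x)‖ = |f s + (f (s+x) - f s)| := by rw [Real.norm_eq_abs]; ring_nf
      _ ≤ |f s| + |f (s+x) - f s| := abs_add_le _ _
      _ ≤ ‖f s‖ + 1 := by simp only [Real.norm_eq_abs]; linarith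

lemma iterA_lip (hsupp : ∀ᵐ x ∂ρ, x ∈ Set.Icc (0:ℝ) 1) :
    ∀ k, LipschitzWith 1 (iterA c ρ k) := by
  intro k
  induction k with
  | zero =>
    rw [lipschitzWith_iff_dist_le_mul]
    intro s t
    simp only [iterA, Real.dist_eq, NNReal.coe_one, one_mul]
    have habs := abs_le.1 (le_refl |s - t|)
    rw [abs_le]
    rcases le_total c s with h | h <;> rcases le_total c t with h' | h' <;>
      rcases le_or_gt s t with h2 | h2 <;>
      simp only [min_eq_left, min_eq_right, *] <;>
      constructor <;>
      simp -failIfUnchanged only [abs_of_nonneg, abs_of_nonpos, sub_nonneg, sub_nonpos] at habs ⊢ <;>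
      cases abs_cases (s - t) <;> linarith
  | succ k ih =>
    rw [lipschitzWith_iff_dist_le_mul]
    intro s t
    have hi1 := integ_shift hsupp ih s
    have hi2 := integ_shift hsupp ih t
    simp only [iterA, Real.dist_eq, NNReal.coe_one, one_mul]
    rw [← integral_sub hi1 hi2]
    calc |∫ x, (iterA c ρ k (s + x) - iterA c ρ k (t + x)) ∂ρ|
        ≤ ∫ x, |iterA c ρ k (s + x) - iterA c ρ k (t + x)| ∂ρ := by
          calc |∫ x, (iterA c ρ k (s + x) - iterA c ρ k (t + x)) ∂ρ|
              = ‖∫ x, (iterA c ρ k (s + x) - iterA c ρ k (t + x)) ∂ρ‖ := (Real.norm_eq_abs _).symm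
            _ ≤ ∫ x, ‖iterA c ρ k (s + x) - iterA c ρ k (t + x)‖ ∂ρ :=
                norm_integral_le_integral_norm _
            _ = ∫ x, |iterA c ρ k (s + x) - iterA c ρ k (t + x)| ∂ρ := by
                simp [Real.norm_eq_abs]
      _ ≤ ∫ _x, |s - t| ∂ρ := by
          refine integral_mono_ae (hi1.sub hi2).abs (integrable_const _) ?_
          filter_upwards with x
          have := ih.dist_le_mul (s + x) (t + x)
          simpa [Real.dist_eq] using this
      _ = |s - t| := by simp

lemma lip_avg (hsupp : ∀ᵐ x ∂ρ, x ∈ Set.Icc (0:ℝ) 1) {f : ℝ → ℝ}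
    (hf : LipschitzWith 1 f) : LipschitzWith 1 (fun s => ∫ x, f (s + x) ∂ρ) := by
  rw [lipschitzWith_iff_dist_le_mul]
  intro s t
  simp only [Real.dist_eq, NNReal.coe_one, one_mul]
  rw [← integral_sub (integ_shift hsupp hf s) (integ_shift hsupp hf t)]
  calc |∫ x, (f (s + x) - f (t + x)) ∂ρ|
      = ‖∫ x, (f (s + x) - f (t + x)) ∂ρ‖ := (Real.norm_eq_abs _).symm
    _ ≤ ∫ x, ‖f (s + x) - f (t + x)‖ ∂ρ := norm_integral_le_integral_norm _
    _ ≤ ∫ _x, |s - t| ∂ρ := by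
        refine integral_mono_ae ((integ_shift hsupp hf s).sub
          (integ_shift hsupp hf t)).norm (integrable_const _) ?_
        filter_upwards with x
        have := hf.dist_le_mul (s + x) (t + x)
        simpa [Real.dist_eq] using this
    _ = |s - t| := by simp

lemma iterA_concave (hsupp : ∀ᵐ x ∂ρ, x ∈ Set.Icc (0:ℝ) 1) :
    ∀ k, ConcaveOn ℝ Set.univ (iterA c ρ k) := by
  intro k
  induction k with
  | zero =>
    refine ⟨convex_univ, fun x _ y _ a b ha hb hab => ?_⟩
    simp only [iterA, smul_eq_mul]
    refine le_min ?_ ?_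
    · calc a * min c x + b * min c y
          ≤ a * c + b * c := add_le_add (mul_le_mul_of_nonneg_left (min_le_left c x) ha)
            (mul_le_mul_of_nonneg_left (min_le_left c y) hb)
        _ = c := by linear_combination c * hab
    · exact add_le_add (mul_le_mul_of_nonneg_left (min_le_right c x) ha)
        (mul_le_mul_of_nonneg_left (min_le_right c y) hb)
  | succ k ih =>
    refine ⟨convex_univ, fun x _ y _ a b ha hb hab => ?_⟩
    have lip := iterA_lip (c := c) hsupp k
    simp only [iterA, smul_eq_mul]
    have heq : ∀ t : ℝ, a * x + b * y + t = a * (x + t) + b * (y + t) := by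
      intro t; linear_combination (-t) * hab
    have hle : ∀ t : ℝ, a * iterA c ρ k (x + t) + b * iterA c ρ k (y + t)
        ≤ iterA c ρ k (a * x + b * y + t) := by
      intro t
      rw [heq t]
      exact ih.2 (Set.mem_univ (x+t)) (Set.mem_univ (y+t)) ha hb hab
    calc a * ∫ t, iterA c ρ k (x + t) ∂ρ + b * ∫ t, iterA c ρ k (y + t) ∂ρ
        = ∫ t, (a * iterA c ρ k (x + t) + b * iterA c ρ k (y + t)) ∂ρ := by
          rw [integral_add ((integ_shift hsupp lip x).const_mul a)
            ((integ_shift hsupp lip y).const_mul b), integral_const_mul, integral_const_mul]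
      _ ≤ ∫ t, iterA c ρ k (a * x + b * y + t) ∂ρ := by
          refine integral_mono_ae (((integ_shift hsupp lip x).const_mul a).add
            ((integ_shift hsupp lip y).const_mul b)) (integ_shift hsupp lip _) ?_
          filter_upwards with t using hle t

end aux

section comp

variable {c p : ℝ} {ν ρY : Measure ℝ} [IsProbabilityMeasure ν] [IsProbabilityMeasure ρY]

lemma iterA_comp (hp0 : 0 ≤ p) (hp1 : p ≤ 1)
    (hνsupp : ∀ᵐ x ∂ν, x ∈ Set.Icc (0:ℝ) 1)
    (hρYsupp : ∀ᵐ x ∂ρY, x ∈ Set.Icc (0:ℝ) 1)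
    (hνmean : ∫ x, x ∂ν = p)
    (hρY : ∀ g : ℝ → ℝ, Measurable g → ∫ x, g x ∂ρY = (1-p) * g 0 + p * g 1) :
    ∀ k s, iterA c ρY k s ≤ iterA c ν k s := by
  intro k
  induction k with
  | zero => intro s; exact le_refl _
  | succ k ih =>
    intro s
    have lipY := iterA_lip (c := c) hρYsupp k
    have lipν := iterA_lip (c := c) hνsupp k
    have hconc := iterA_concave (c := c) hνsupp k
    have hxint : Integrable (fun x : ℝ => x) ν := by
      refine (integrable_const (1:ℝ)).mono' aestronglyMeasurable_id ?_
      filter_upwards [hνsupp] with x hx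
      exact abs_le.2 ⟨by linarith [hx.1], hx.2⟩
    have step1 : iterA c ρY (k+1) s
        = (1-p) * iterA c ρY k s + p * iterA c ρY k (s+1) := by
      have := hρY (fun x => iterA c ρY k (s + x))
        (lipY.continuous.comp (continuous_const.add continuous_id)).measurable
      simpa [iterA] using this
    have step2 : (1-p) * iterA c ρY k s + p * iterA c ρY k (s+1)
        ≤ (1-p) * iterA c ν k s + p * iterA c ν k (s+1) := by
      have h1 := ih s
      have h2 := ih (s+1)
      nlinarith
    have step3 : (1-p) * iterA c ν k s + p * iterA c ν k (s+1)
        = ∫ x, ((1-x) * iterA c ν k s + x * iterA c ν k (s+1)) ∂ν := by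
      rw [integral_add, integral_mul_const, integral_mul_const]
      · have h1 : ∫ x : ℝ, (1 - x) ∂ν = 1 - p := by
          rw [integral_sub (integrable_const 1) hxint, hνmean]; simp
        rw [h1, hνmean]
      · exact (((integrable_const (1:ℝ)).sub hxint).mul_const _)
      · exact hxint.mul_const _
    have step4 : ∫ x, ((1-x) * iterA c ν k s + x * iterA c ν k (s+1)) ∂ν
        ≤ ∫ x, iterA c ν k (s + x) ∂ν := by
      refine integral_mono_ae ((((integrable_const (1:ℝ)).sub hxint).mul_const _).add
        (hxint.mul_const _)) (integ_shift hνsupp lipν s) ?_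
      filter_upwards [hνsupp] with x hx
      have := hconc.2 (Set.mem_univ s) (Set.mem_univ (s+1))
        (by linarith [hx.2] : (0:ℝ) ≤ 1 - x) hx.1 (by ring)
      simp only [smul_eq_mul] at this
      have heq : (1-x) * s + x * (s+1) = s + x := by ring
      rw [heq] at this
      linarith
    calc iterA c ρY (k+1) s = (1-p) * iterA c ρY k s + p * iterA c ρY k (s+1) := step1
      _ ≤ (1-p) * iterA c ν k s + p * iterA c ν k (s+1) := step2
      _ = ∫ x, ((1-x) * iterA c ν k s + x * iterA c ν k (s+1)) ∂ν := step3
      _ ≤ ∫ x, iterA c ν k (s + x) ∂ν := step4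
      _ = iterA c ν (k+1) s := rfl

end comp

section mainL

variable {Ω : Type*} [MeasurableSpace Ω] {μ : Measure Ω} [IsProbabilityMeasure μ]

/-- pair integral lemma -/
lemma pair_integral {S V : Ω → ℝ} (hS : Measurable S) (hV : Measurable V)
    (hind : IndepFun S V μ) {ρ : Measure ℝ} [IsProbabilityMeasure ρ]
    (hρ : μ.map V = ρ) (hρsupp : ∀ᵐ x ∂ρ, x ∈ Set.Icc (0:ℝ) 1)
    (M : ℝ) (hSb : ∀ ω, S ω ∈ Set.Icc (0:ℝ) M)
    {f : ℝ → ℝ} (hf : LipschitzWith 1 f) :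
    ∫ ω, f (S ω + V ω) ∂μ = ∫ ω, (∫ x, f (S ω + x) ∂ρ) ∂μ := by
  have hmap : μ.map (fun ω => (S ω, V ω)) = (μ.map S).prod ρ := by
    rw [← hρ]
    exact ((indepFun_iff_map_prod_eq_prod_map_map hS.aemeasurable hV.aemeasurable).1 hind)
  have hSprob : IsProbabilityMeasure (μ.map S) := Measure.isProbabilityMeasure_map hS.aemeasurable
  have hSsupp : ∀ᵐ s ∂(μ.map S), s ∈ Set.Icc (0:ℝ) M :=
    (ae_map_iff hS.aemeasurable measurableSet_Icc).2 (Filter.Eventually.of_forall hSb)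
  have hfc : Continuous fun q : ℝ × ℝ => f (q.1 + q.2) :=
    hf.continuous.comp (continuous_fst.add continuous_snd)
  have hint : Integrable (fun q : ℝ × ℝ => f (q.1 + q.2)) ((μ.map S).prod ρ) := by
    refine (integrable_const (‖f 0‖ + (|M| + 1))).mono' hfc.aestronglyMeasurable ?_
    have hae : ∀ᵐ q ∂((μ.map S).prod ρ),
        q ∈ (Set.Icc (0:ℝ) M ×ˢ Set.Icc (0:ℝ) 1) := by
      rw [Measure.ae_prod_mem_iff_ae_ae_mem (measurableSet_Icc.prod measurableSet_Icc)]
      filter_upwards [hSsupp] with s hs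
      filter_upwards [hρsupp] with x hx
      exact Set.mk_mem_prod hs hx
    filter_upwards [hae] with q hq
    obtain ⟨hq1, hq2⟩ := hq
    have h1 : |f (q.1 + q.2) - f 0| ≤ |q.1 + q.2| := by
      have := hf.dist_le_mul (q.1 + q.2) 0
      simpa [Real.dist_eq] using this
    have h2 : |q.1 + q.2| ≤ |M| + 1 := by
      rw [abs_of_nonneg (by linarith [hq1.1, hq2.1] : (0:ℝ) ≤ q.1 + q.2)]
      have := le_abs_self M
      linarith [hq1.2, hq2.2]
    calc ‖f (q.1 + q.2)‖ = |f 0 + (f (q.1+q.2) - f 0)| := by rw [Real.norm_eq_abs]; ring_nf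
      _ ≤ |f 0| + |f (q.1+q.2) - f 0| := abs_add_le _ _
      _ ≤ ‖f 0‖ + (|M| + 1) := by simp only [Real.norm_eq_abs]; linarith
  calc ∫ ω, f (S ω + V ω) ∂μ
      = ∫ q : ℝ × ℝ, f (q.1 + q.2) ∂(μ.map (fun ω => (S ω, V ω))) := by
        rw [integral_map (hS.prodMk hV).aemeasurable hfc.aestronglyMeasurable]
    _ = ∫ q : ℝ × ℝ, f (q.1 + q.2) ∂((μ.map S).prod ρ) := by rw [hmap]
    _ = ∫ s, (∫ x, f (s + x) ∂ρ) ∂(μ.map S) := integral_prod _ hint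
    _ = ∫ ω, (∫ x, f (S ω + x) ∂ρ) ∂μ := by
        exact integral_map hS.aemeasurable (lip_avg hρsupp hf).continuous.aestronglyMeasurable

end mainL

lemma lemL {Ω : Type*} [MeasurableSpace Ω] {μ : Measure Ω} [IsProbabilityMeasure μ]
    (c : ℝ) (T : ℕ) {ρ : Measure ℝ} [IsProbabilityMeasure ρ]
    (hρsupp : ∀ᵐ x ∂ρ, x ∈ Set.Icc (0:ℝ) 1)
    (W : Fin T → Ω → ℝ) (hm : ∀ t, Measurable (W t))
    (hind : iIndepFun W μ)
    (hlaw : ∀ t, μ.map (W t) = ρ)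
    (hrange : ∀ t ω, W t ω ∈ Set.Icc (0:ℝ) 1) :
    ∫ ω, min c (∑ t, W t ω) ∂μ = iterA c ρ T 0 := by
  set S : ℕ → Ω → ℝ := fun k ω => ∑ t ∈ Finset.univ.filter (fun t : Fin T => (t:ℕ) < k), W t ω
    with hS
  have hSmeas : ∀ k, Measurable (S k) := fun k =>
    Finset.measurable_sum _ (fun t _ => hm t)
  have hSbound : ∀ k ω, S k ω ∈ Set.Icc (0:ℝ) T := by
    intro k ω
    constructor
    · exact Finset.sum_nonneg fun t _ => (hrange t ω).1
    · calc S k ω ≤ ∑ t ∈ Finset.univ.filter (fun t : Fin T => (t:ℕ) < k), (1:ℝ) :=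
          Finset.sum_le_sum fun t _ => (hrange t ω).2
        _ = (Finset.univ.filter (fun t : Fin T => (t:ℕ) < k)).card := by simp
        _ ≤ ((Finset.univ : Finset (Fin T)).card : ℝ) := by
            exact Nat.cast_le.2 (Finset.card_le_card (Finset.filter_subset _ _))
        _ = T := by simp
  have claim : ∀ k, k ≤ T → ∫ ω, iterA c ρ (T - k) (S k ω) ∂μ = iterA c ρ T 0 := by
    intro k
    induction k with
    | zero =>
      intro _
      have h0 : ∀ ω, S 0 ω = 0 := by
        intro ω; simp [hS]
      simp only [Nat.sub_zero]
      rw [show (fun ω => iterA c ρ T (S 0 ω)) = fun _ => iterA c ρ T 0 by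
        funext ω; rw [h0]]
      simp
    | succ k ih =>
      intro hk1
      have hk : k < T := hk1
      have hnotmem : (⟨k, hk⟩ : Fin T) ∉ Finset.univ.filter (fun t : Fin T => (t:ℕ) < k) := by
        simp
      have hindSV : IndepFun (S k) (W ⟨k, hk⟩) μ := by
        have := hind.indepFun_finsetSum_of_notMem hm hnotmem
        have heq : S k = ∑ j ∈ Finset.univ.filter (fun t : Fin T => (t:ℕ) < k), W j := by
          funext ω; rw [hS]; simp [Finset.sum_apply]
        rw [heq]
        exact this
      have hSsucc : ∀ ω, S (k+1) ω = S k ω + W ⟨k, hk⟩ ω := by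
        intro ω
        have hins : Finset.univ.filter (fun t : Fin T => (t:ℕ) < k+1)
            = insert (⟨k, hk⟩ : Fin T) (Finset.univ.filter (fun t : Fin T => (t:ℕ) < k)) := by
          ext t
          simp only [Finset.mem_filter, Finset.mem_univ, true_and, Finset.mem_insert]
          constructor
          · intro ht
            rcases Nat.lt_succ_iff_lt_or_eq.1 ht with h | h
            · exact Or.inr (by simpa using h)
            · exact Or.inl (Fin.ext h)
          · rintro (h | h)
            · rw [h]; exact Nat.lt_succ_self k
            · exact Nat.lt_succ_of_lt h
        simp only [hS, hins, Finset.sum_insert hnotmem]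
        ring
      have hTk : T - k = (T - (k+1)) + 1 := by omega
      have lipf := iterA_lip (c := c) hρsupp (T - (k+1))
      have key := pair_integral (hSmeas k) (hm ⟨k, hk⟩) hindSV (hlaw ⟨k, hk⟩) hρsupp
        (T : ℝ) (hSbound k) lipf
      calc ∫ ω, iterA c ρ (T - (k+1)) (S (k+1) ω) ∂μ
          = ∫ ω, iterA c ρ (T - (k+1)) (S k ω + W ⟨k, hk⟩ ω) ∂μ := by
            congr 1; funext ω; rw [hSsucc ω]
        _ = ∫ ω, (∫ x, iterA c ρ (T - (k+1)) (S k ω + x) ∂ρ) ∂μ := key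
        _ = ∫ ω, iterA c ρ (T - k) (S k ω) ∂μ := by rw [hTk]; rfl
        _ = iterA c ρ T 0 := ih hk.le
  have hfin := claim T le_rfl
  have hful : Finset.univ.filter (fun t : Fin T => (t:ℕ) < T) = Finset.univ := by
    ext t; simp [t.isLt]
  simp only [Nat.sub_self, hS, hful] at hfin
  exact hfin

lemma bern_int {Ω : Type*} [MeasurableSpace Ω] {μ : Measure Ω} [IsProbabilityMeasure μ]
    {p : ℝ} (hp0 : 0 ≤ p) {Z : Ω → ℝ} (hZm : Measurable Z)
    (hval : ∀ ω, Z ω = 0 ∨ Z ω = 1) (hdist : μ {ω | Z ω = 1} = ENNReal.ofReal p)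
    (g : ℝ → ℝ) (hg : Measurable g) :
    ∫ ω, g (Z ω) ∂μ = (1-p) * g 0 + p * g 1 := by
  set A := {ω | Z ω = 1} with hA
  have hAm : MeasurableSet A := hZm (measurableSet_singleton (1:ℝ))
  have heq : ∀ ω, g (Z ω) = g 0 + A.indicator (fun _ => g 1 - g 0) ω := by
    intro ω
    rcases hval ω with h | h
    · have : ω ∉ A := by simp [hA, h]
      rw [Set.indicator_of_notMem this, h]; ring
    · have : ω ∈ A := by simp [hA, h]
      rw [Set.indicator_of_mem this, h]; ring
  rw [show (fun ω => g (Z ω)) = fun ω => g 0 + A.indicator (fun _ => g 1 - g 0) ω from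
    funext heq]
  rw [integral_add (integrable_const _) ((integrable_const _).indicator hAm),
    integral_const, integral_indicator_const _ hAm, measureReal_def μ A, hdist]
  simp [ENNReal.toReal_ofReal hp0]
  ring

lemma bern_preimage {Ω : Type*} [MeasurableSpace Ω] {μ : Measure Ω} [IsProbabilityMeasure μ]
    {p : ℝ} (hp1 : p ≤ 1) {Z : Ω → ℝ} (hZm : Measurable Z)
    (hval : ∀ ω, Z ω = 0 ∨ Z ω = 1) (hdist : μ {ω | Z ω = 1} = ENNReal.ofReal p)
    (s : Set ℝ) :
    μ (Z ⁻¹' s) = s.indicator (fun _ => 1 - ENNReal.ofReal p) (0:ℝ)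
      + s.indicator (fun _ => ENNReal.ofReal p) (1:ℝ) := by
  set A := {ω | Z ω = 1} with hA
  have hAm : MeasurableSet A := hZm (measurableSet_singleton (1:ℝ))
  have hple : ENNReal.ofReal p ≤ 1 := by
    rw [show (1 : ENNReal) = ENNReal.ofReal 1 by simp]
    exact ENNReal.ofReal_le_ofReal hp1
  have hcompl : μ Aᶜ = 1 - ENNReal.ofReal p := by
    rw [measure_compl hAm (measure_ne_top μ A), hdist]
    simp
  have h01 : (0:ℝ) ≠ 1 := by norm_num
  by_cases h0 : (0:ℝ) ∈ s <;> by_cases h1 : (1:ℝ) ∈ s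
  · rw [Set.indicator_of_mem h0, Set.indicator_of_mem h1]
    have huniv : Z ⁻¹' s = Set.univ := by
      ext ω; simp only [Set.mem_preimage, Set.mem_univ, iff_true]
      rcases hval ω with h | h <;> rw [h] <;> assumption
    rw [huniv, measure_univ, tsub_add_cancel_of_le hple]
  · rw [Set.indicator_of_mem h0, Set.indicator_of_notMem h1, add_zero]
    have hpre : Z ⁻¹' s = Aᶜ := by
      ext ω
      simp only [Set.mem_preimage, Set.mem_compl_iff, hA, Set.mem_setOf_eq]
      rcases hval ω with h | h <;> rw [h]
      · simp only [h0, true_iff]; exact h01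
      · simp only [h1, false_iff, not_not]
    rw [hpre, hcompl]
  · rw [Set.indicator_of_notMem h0, Set.indicator_of_mem h1, zero_add]
    have hpre : Z ⁻¹' s = A := by
      ext ω
      simp only [Set.mem_preimage, hA, Set.mem_setOf_eq]
      rcases hval ω with h | h <;> rw [h]
      · simp only [h0, false_iff]; exact h01
      · simp only [h1, true_iff]
    rw [hpre, hdist]
  · rw [Set.indicator_of_notMem h0, Set.indicator_of_notMem h1, add_zero]
    have hpre : Z ⁻¹' s = ∅ := by
      ext ω
      simp only [Set.mem_preimage, Set.mem_empty_iff_false, iff_false]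
      rcases hval ω with h | h <;> rw [h] <;> assumption
    rw [hpre]
    simp

/-- Let `c > 0`, `T` a positive integer, `p ∈ [0,1]`. Let `X_1, …, X_T` be i.i.d.
random variables taking values in `[0,1]` with `E[X_t] = p`, and let `Y_1, …, Y_T` be i.i.d.
Bernoulli random variables with success probability `p`. Then
`E[min(c, Σ X_t)] ≥ E[min(c, Σ Y_t)]`. -/
theorem stmt_1 {Ω : Type*} [MeasurableSpace Ω] (μ : Measure Ω) [IsProbabilityMeasure μ]
    (c : ℝ) (hc : 0 < c) (T : ℕ) (hT : 0 < T) (p : ℝ) (hp0 : 0 ≤ p) (hp1 : p ≤ 1)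
    (X Y : Fin T → Ω → ℝ)
    (hXmeas : ∀ t, Measurable (X t))
    (hXindep : iIndepFun X μ)
    (hXident : ∀ s t : Fin T, μ.map (X s) = μ.map (X t))
    (hXrange : ∀ t ω, X t ω ∈ Set.Icc (0 : ℝ) 1)
    (hXmean : ∀ t, ∫ ω, X t ω ∂μ = p)
    (hYmeas : ∀ t, Measurable (Y t))
    (hYindep : iIndepFun Y μ)
    (hYval : ∀ t ω, Y t ω = 0 ∨ Y t ω = 1)
    (hYdist : ∀ t, μ {ω | Y t ω = 1} = ENNReal.ofReal p) :
    ∫ ω, min c (∑ t, Y t ω) ∂μ ≤ ∫ ω, min c (∑ t, X t ω) ∂μ := by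
  have t0 : Fin T := ⟨0, hT⟩
  -- set up the two laws
  set ν : Measure ℝ := μ.map (X t0) with hν
  set ρY : Measure ℝ := μ.map (Y t0) with hρY
  have hνprob : IsProbabilityMeasure ν := Measure.isProbabilityMeasure_map (hXmeas t0).aemeasurable
  have hρYprob : IsProbabilityMeasure ρY := Measure.isProbabilityMeasure_map (hYmeas t0).aemeasurable
  have hνsupp : ∀ᵐ x ∂ν, x ∈ Set.Icc (0:ℝ) 1 :=
    (ae_map_iff (hXmeas t0).aemeasurable measurableSet_Icc).2
      (Filter.Eventually.of_forall (hXrange t0))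
  have hYrange : ∀ t ω, Y t ω ∈ Set.Icc (0:ℝ) 1 := by
    intro t ω
    rcases hYval t ω with h | h <;> rw [h] <;> constructor <;> norm_num
  have hρYsupp : ∀ᵐ x ∂ρY, x ∈ Set.Icc (0:ℝ) 1 :=
    (ae_map_iff (hYmeas t0).aemeasurable measurableSet_Icc).2
      (Filter.Eventually.of_forall (hYrange t0))
  have hνmean : ∫ x, x ∂ν = p := by
    have h := integral_map (μ := μ) (φ := X t0) (hXmeas t0).aemeasurable
      (f := fun x : ℝ => x) aestronglyMeasurable_id
    rw [hν, h]
    exact hXmean t0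
  have hρYint : ∀ g : ℝ → ℝ, Measurable g → ∫ x, g x ∂ρY = (1-p) * g 0 + p * g 1 := by
    intro g hg
    rw [hρY, integral_map (hYmeas t0).aemeasurable hg.aestronglyMeasurable]
    exact bern_int hp0 (hYmeas t0) (hYval t0) (hYdist t0) g hg
  have hT0 : (0:ℕ) < T := hT
  have hYlaw : ∀ t, μ.map (Y t) = ρY := by
    intro t
    rw [hρY]
    ext s hs
    rw [Measure.map_apply (hYmeas t) hs, Measure.map_apply (hYmeas t0) hs,
      bern_preimage hp1 (hYmeas t) (hYval t) (hYdist t) s,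
      bern_preimage hp1 (hYmeas t0) (hYval t0) (hYdist t0) s]
  have hXlaw : ∀ t, μ.map (X t) = ν := fun t => hXident t t0
  rw [lemL c T hρYsupp Y hYmeas hYindep hYlaw hYrange,
    lemL c T hνsupp X hXmeas hXindep hXlaw hXrange]
  exact iterA_comp hp0 hp1 hνsupp hρYsupp hνmean hρYint T 0
end

section
/- Let c > 0 be a real number and T a positive integer. The function f : (0,1] → ℝ defined by f(x) = E[min(c, Bin(T, x))] / (T x) is non-increasing: for all real x, y with 0 < x ≤ y ≤ 1, f(x) ≥ f(y). -/
/-- `E[min(c, Bin(T, ρ))]`: the expectation of a Binomial(T, ρ) random variable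
truncated at `c`. -/
noncomputable def truncBinExp (T : ℕ) (ρ c : ℝ) : ℝ :=
  ∑ l ∈ Finset.range (T + 1), (T.choose l : ℝ) * ρ ^ l * (1 - ρ) ^ (T - l) * min c (l : ℝ)

open Finset in
private lemma binom_mean (n : ℕ) (a b : ℝ) :
    ∑ k ∈ range (n + 1), (n.choose k : ℝ) * a ^ k * b ^ (n - k) * k
      = n * a * (a + b) ^ (n - 1) := by
  cases n with
  | zero => simp
  | succ n =>
    rw [Finset.sum_range_succ']
    simp only [Nat.cast_zero, mul_zero, add_zero, Nat.succ_sub_one]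
    have h1 : ∀ j ∈ range (n + 1),
        ((n + 1).choose (j + 1) : ℝ) * a ^ (j + 1) * b ^ (n + 1 - (j + 1)) * ((j : ℝ) + 1)
          = ((n : ℝ) + 1) * a * (a ^ j * b ^ (n - j) * (n.choose j : ℝ)) := by
      intro j hj
      have h : ((n + 1) * n.choose j : ℕ) = ((n + 1).choose (j + 1) * (j + 1) : ℕ) :=
        Nat.add_one_mul_choose_eq n j
      have h' : ((n : ℝ) + 1) * (n.choose j : ℝ)
          = ((n + 1).choose (j + 1) : ℝ) * ((j : ℝ) + 1) := by exact_mod_cast h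
      have hsub : n + 1 - (j + 1) = n - j := by omega
      rw [hsub]
      calc ((n + 1).choose (j + 1) : ℝ) * a ^ (j + 1) * b ^ (n - j) * ((j : ℝ) + 1)
          = (((n + 1).choose (j + 1) : ℝ) * ((j : ℝ) + 1)) * (a ^ (j + 1) * b ^ (n - j)) := by
            ring
        _ = (((n : ℝ) + 1) * (n.choose j : ℝ)) * (a ^ (j + 1) * b ^ (n - j)) := by rw [← h']
        _ = ((n : ℝ) + 1) * a * (a ^ j * b ^ (n - j) * (n.choose j : ℝ)) := by ring
    rw [Finset.sum_congr rfl (by exact_mod_cast h1), ← Finset.mul_sum, ← add_pow]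

private lemma min_cross (c : ℝ) (hc : 0 < c) (k m : ℕ) (hkm : k ≤ m) :
    (k : ℝ) * min c (m : ℝ) ≤ (m : ℝ) * min c (k : ℝ) := by
  rcases le_total c (k : ℝ) with h | h
  · rw [min_eq_left h]
    have hkm' : (k : ℝ) ≤ (m : ℝ) := by exact_mod_cast hkm
    calc (k : ℝ) * min c (m : ℝ) ≤ (k : ℝ) * c :=
          mul_le_mul_of_nonneg_left (min_le_left _ _) (by positivity)
      _ ≤ (m : ℝ) * c := mul_le_mul_of_nonneg_right hkm' hc.le
  · rw [min_eq_right h]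
    calc (k : ℝ) * min c (m : ℝ) ≤ (k : ℝ) * (m : ℝ) :=
          mul_le_mul_of_nonneg_left (min_le_right _ _) (by positivity)
      _ = (m : ℝ) * (k : ℝ) := mul_comm _ _

open Finset in
private lemma binom_compose (n : ℕ) (y q : ℝ) (F : ℕ → ℝ) :
    ∑ m ∈ range (n + 1), (n.choose m : ℝ) * y ^ m * (1 - y) ^ (n - m) *
        (∑ k ∈ range (m + 1), (m.choose k : ℝ) * q ^ k * (1 - q) ^ (m - k) * F k)
      = ∑ k ∈ range (n + 1), (n.choose k : ℝ) * (y * q) ^ k * (1 - y * q) ^ (n - k) * F k := by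
  have hstep : ∀ m ∈ range (n + 1),
      (n.choose m : ℝ) * y ^ m * (1 - y) ^ (n - m) *
          (∑ k ∈ range (m + 1), (m.choose k : ℝ) * q ^ k * (1 - q) ^ (m - k) * F k)
        = ∑ k ∈ range (n + 1), (n.choose m : ℝ) * y ^ m * (1 - y) ^ (n - m) *
            ((m.choose k : ℝ) * q ^ k * (1 - q) ^ (m - k) * F k) := by
    intro m hm
    rw [Finset.mul_sum]
    apply Finset.sum_subset
    · intro k hk
      simp only [mem_range] at *
      omega
    · intro k _ hk
      simp only [mem_range, not_lt] at hk
      have : m.choose k = 0 := Nat.choose_eq_zero_of_lt (by omega)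
      simp [this]
  rw [Finset.sum_congr rfl hstep, Finset.sum_comm]
  apply Finset.sum_congr rfl
  intro k hk
  simp only [mem_range] at hk
  have hk' : k ≤ n := by omega
  -- restrict to m ≥ k
  rw [show (∑ m ∈ range (n + 1), (n.choose m : ℝ) * y ^ m * (1 - y) ^ (n - m) *
        ((m.choose k : ℝ) * q ^ k * (1 - q) ^ (m - k) * F k))
      = ∑ m ∈ Finset.Ico k (n + 1), (n.choose m : ℝ) * y ^ m * (1 - y) ^ (n - m) *
        ((m.choose k : ℝ) * q ^ k * (1 - q) ^ (m - k) * F k) from by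
    symm
    apply Finset.sum_subset
    · intro m hm; simp only [Finset.mem_Ico, mem_range] at *; omega
    · intro m _ hm
      simp only [Finset.mem_Ico, mem_range, not_and, not_le] at hm
      rcases lt_or_ge m (n + 1) with h' | h'
      · have : m.choose k = 0 := Nat.choose_eq_zero_of_lt (by omega)
        simp [this]
      · simp at *; omega]
  rw [Finset.sum_Ico_eq_sum_range]
  rw [show n + 1 - k = (n - k) + 1 from by omega]
  have hterm : ∀ j ∈ range ((n - k) + 1),
      (n.choose (k + j) : ℝ) * y ^ (k + j) * (1 - y) ^ (n - (k + j)) *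
          (((k + j).choose k : ℝ) * q ^ k * (1 - q) ^ (k + j - k) * F k)
        = ((n.choose k : ℝ) * (y * q) ^ k * F k) *
            ((y * (1 - q)) ^ j * (1 - y) ^ ((n - k) - j) * ((n - k).choose j : ℝ)) := by
    intro j hj
    simp only [mem_range] at hj
    have hkj : k + j ≤ n := by omega
    have hcc : (n.choose (k + j) * (k + j).choose k : ℕ)
        = (n.choose k * (n - k).choose (k + j - k) : ℕ) :=
      Nat.choose_mul (Nat.le_add_right k j)
    have hcc' : ((n.choose (k + j)) : ℝ) * (((k + j).choose k) : ℝ)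
        = ((n.choose k) : ℝ) * (((n - k).choose j) : ℝ) := by
      have h2 : k + j - k = j := by omega
      rw [h2] at hcc
      exact_mod_cast hcc
    have h3 : k + j - k = j := by omega
    have h4 : n - (k + j) = (n - k) - j := by omega
    rw [h3, h4, pow_add, mul_pow, mul_pow]
    calc (n.choose (k + j) : ℝ) * (y ^ k * y ^ j) * (1 - y) ^ (n - k - j) *
          (((k + j).choose k : ℝ) * q ^ k * (1 - q) ^ j * F k)
        = ((n.choose (k + j) : ℝ) * (((k + j).choose k) : ℝ)) *
            (y ^ k * y ^ j * (1 - y) ^ (n - k - j) * q ^ k * (1 - q) ^ j * F k) := by ring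
      _ = ((n.choose k : ℝ) * (((n - k).choose j) : ℝ)) *
            (y ^ k * y ^ j * (1 - y) ^ (n - k - j) * q ^ k * (1 - q) ^ j * F k) := by rw [hcc']
      _ = ((n.choose k : ℝ) * (y ^ k * q ^ k) * F k) *
            (y ^ j * (1 - q) ^ j * (1 - y) ^ (n - k - j) * ((n - k).choose j : ℝ)) := by ring
      _ = _ := by ring
  rw [Finset.sum_congr rfl hterm, ← Finset.mul_sum, ← add_pow]
  have : y * (1 - q) + (1 - y) = 1 - y * q := by ring
  rw [this]
  ring

open Finset in
private lemma inner_bound (c : ℝ) (hc : 0 < c) (q : ℝ) (hq0 : 0 ≤ q) (hq1 : q ≤ 1) (m : ℕ) :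
    q * min c (m : ℝ)
      ≤ ∑ k ∈ range (m + 1), (m.choose k : ℝ) * q ^ k * (1 - q) ^ (m - k) * min c (k : ℝ) := by
  rcases Nat.eq_zero_or_pos m with hm | hm
  · subst hm
    simp [min_eq_right hc.le]
  · have hm' : (0 : ℝ) < m := by exact_mod_cast hm
    rw [← mul_le_mul_iff_right₀ hm']
    have hmean := binom_mean m q (1 - q)
    have hone : q + (1 - q) = 1 := by ring
    rw [hone, one_pow, mul_one] at hmean
    calc (m : ℝ) * (q * min c (m : ℝ))
        = min c (m : ℝ) * ((m : ℝ) * q) := by ring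
      _ = min c (m : ℝ) * ∑ k ∈ range (m + 1),
            (m.choose k : ℝ) * q ^ k * (1 - q) ^ (m - k) * k := by rw [hmean]
      _ = ∑ k ∈ range (m + 1),
            ((m.choose k : ℝ) * q ^ k * (1 - q) ^ (m - k)) * ((k : ℝ) * min c (m : ℝ)) := by
          rw [Finset.mul_sum]; apply Finset.sum_congr rfl; intro k _; ring
      _ ≤ ∑ k ∈ range (m + 1),
            ((m.choose k : ℝ) * q ^ k * (1 - q) ^ (m - k)) * ((m : ℝ) * min c (k : ℝ)) := by
          apply Finset.sum_le_sum
          intro k hkmem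
          apply mul_le_mul_of_nonneg_left (min_cross c hc k m (by
            simp only [Finset.mem_range] at hkmem; omega))
          have h1q : (0 : ℝ) ≤ 1 - q := by linarith
          positivity
      _ = (m : ℝ) * ∑ k ∈ range (m + 1),
            (m.choose k : ℝ) * q ^ k * (1 - q) ^ (m - k) * min c (k : ℝ) := by
          rw [Finset.mul_sum]; apply Finset.sum_congr rfl; intro k _; ring

/-- For `c > 0` and a positive integer `T`, the function
`f(x) = E[min(c, Bin(T, x))] / (T x)` is non-increasing on `(0, 1]`. -/
theorem stmt_5 (c : ℝ) (hc : 0 < c) (T : ℕ) (hT : 0 < T)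
    (x y : ℝ) (hx : 0 < x) (hxy : x ≤ y) (hy : y ≤ 1) :
    truncBinExp T y c / (T * y) ≤ truncBinExp T x c / (T * x) := by
  have hy0 : 0 < y := lt_of_lt_of_le hx hxy
  set q : ℝ := x / y with hqdef
  have hq0 : 0 ≤ q := by positivity
  have hq1 : q ≤ 1 := div_le_one_of_le₀ hxy hy0.le
  have hyq : y * q = x := by rw [hqdef]; field_simp
  have hkey : q * truncBinExp T y c ≤ truncBinExp T x c := by
    have hcomp := binom_compose T y q (fun k => min c (k : ℝ))
    rw [hyq] at hcomp
    unfold truncBinExp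
    rw [← hcomp, Finset.mul_sum]
    apply Finset.sum_le_sum
    intro m hm
    simp only [Finset.mem_range] at hm
    have hcoef : (0 : ℝ) ≤ (T.choose m : ℝ) * y ^ m * (1 - y) ^ (T - m) := by
      have h1y : (0 : ℝ) ≤ 1 - y := by linarith
      positivity
    calc q * ((T.choose m : ℝ) * y ^ m * (1 - y) ^ (T - m) * min c (m : ℝ))
        = ((T.choose m : ℝ) * y ^ m * (1 - y) ^ (T - m)) * (q * min c (m : ℝ)) := by ring
      _ ≤ ((T.choose m : ℝ) * y ^ m * (1 - y) ^ (T - m)) *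
            (∑ k ∈ Finset.range (m + 1),
              (m.choose k : ℝ) * q ^ k * (1 - q) ^ (m - k) * min c (k : ℝ)) :=
          mul_le_mul_of_nonneg_left (inner_bound c hc q hq0 hq1 m) hcoef
  have hT' : (0 : ℝ) < T := by exact_mod_cast hT
  rw [div_le_div_iff₀ (by positivity) (by positivity)]
  have h2 := mul_le_mul_of_nonneg_right hkey (by positivity : (0 : ℝ) ≤ (T : ℝ) * y)
  calc truncBinExp T y c * ((T : ℝ) * x)
      = q * truncBinExp T y c * ((T : ℝ) * y) := by
        rw [hqdef]; field_simp
    _ ≤ truncBinExp T x c * ((T : ℝ) * y) := h2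
end

section
/- Let T be a positive integer and let x, y be real numbers with T ≥ x ≥ y > 0. Then E[min(x, Bin(T, x/T))] / x ≥ E[min(y, Bin(T, y/T))] / y. -/
open Finset

lemma binom_sum_one (k n : ℕ) (hk : k ≤ n) (b : ℝ) :
    ∑ l ∈ range (n+1), (k.choose l : ℝ) * b^l * (1-b)^(k-l) = 1 := by
  rw [← Finset.sum_subset (Finset.range_subset_range.2 (by omega) :
      range (k+1) ⊆ range (n+1))]
  · have h2 : ∑ l ∈ range (k+1), (k.choose l : ℝ) * b^l * (1-b)^(k-l)
        = ∑ l ∈ range (k+1), b^l * (1-b)^(k-l) * (k.choose l : ℝ) :=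
      Finset.sum_congr rfl (fun _ _ => by ring)
    rw [h2, ← add_pow]
    norm_num
  · intro l _ hl
    rw [Nat.choose_eq_zero_of_lt (by simpa using hl)]
    simp

lemma binom_sum_mean (k n : ℕ) (hk : k ≤ n) (b : ℝ) :
    ∑ l ∈ range (n+1), (k.choose l : ℝ) * b^l * (1-b)^(k-l) * l = k * b := by
  rw [← Finset.sum_subset (Finset.range_subset_range.2 (by omega) :
      range (k+1) ⊆ range (n+1))]
  · cases k with
    | zero => simp
    | succ m =>
      rw [Finset.sum_range_succ']
      simp only [Nat.cast_zero, mul_zero, add_zero, Nat.cast_add, Nat.cast_one]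
      have key : ∀ l ∈ range (m+1),
          ((m+1).choose (l+1) : ℝ) * b^(l+1) * (1-b)^(m+1-(l+1)) * ((l:ℝ)+1)
          = ((m:ℝ)+1) * b * ((m.choose l : ℝ) * b^l * (1-b)^(m-l)) := by
        intro l hl
        have h : ((m+1).choose (l+1) : ℝ) * ((l:ℝ)+1) = ((m:ℝ)+1) * (m.choose l : ℝ) := by
          exact_mod_cast (Nat.add_one_mul_choose_eq m l).symm
        have hsub : m + 1 - (l + 1) = m - l := by omega
        rw [hsub]
        calc ((m+1).choose (l+1) : ℝ) * b^(l+1) * (1-b)^(m-l) * ((l:ℝ)+1)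
            = (((m+1).choose (l+1) : ℝ) * ((l:ℝ)+1)) * (b^(l+1) * (1-b)^(m-l)) := by ring
          _ = (((m:ℝ)+1) * (m.choose l : ℝ)) * (b^(l+1) * (1-b)^(m-l)) := by rw [h]
          _ = ((m:ℝ)+1) * b * ((m.choose l : ℝ) * b^l * (1-b)^(m-l)) := by
              rw [pow_succ]; ring
      rw [Finset.sum_congr rfl key, ← Finset.mul_sum, binom_sum_one m m le_rfl b, mul_one]
  · intro l _ hl
    rw [Nat.choose_eq_zero_of_lt (by simpa using hl)]
    simp

lemma thinning (T l : ℕ) (hl : l ≤ T) (a b : ℝ) :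
    ∑ k ∈ range (T+1),
      (T.choose k : ℝ) * a^k * (1-a)^(T-k) * ((k.choose l : ℝ) * b^l * (1-b)^(k-l))
    = (T.choose l : ℝ) * (a*b)^l * (1-a*b)^(T-l) := by
  rw [Finset.range_eq_Ico,
    ← Finset.sum_subset (Finset.Ico_subset_Ico (Nat.zero_le l) le_rfl :
      Finset.Ico l (T+1) ⊆ Finset.Ico 0 (T+1))]
  · rw [Finset.sum_Ico_eq_sum_range, show T + 1 - l = (T - l) + 1 from by omega]
    have key : ∀ j ∈ range (T-l+1),
        (T.choose (l+j) : ℝ) * a^(l+j) * (1-a)^(T-(l+j))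
          * (((l+j).choose l : ℝ) * b^l * (1-b)^((l+j)-l))
        = (T.choose l : ℝ) * (a*b)^l
          * ((a*(1-b))^j * (1-a)^((T-l)-j) * ((T-l).choose j : ℝ)) := by
      intro j hj
      have hj' : j ≤ T - l := by simpa [Nat.lt_succ_iff] using hj
      have hmul : (T.choose (l+j) : ℝ) * ((l+j).choose l : ℝ)
          = (T.choose l : ℝ) * ((T-l).choose j : ℝ) := by
        have h := Nat.choose_mul (n := T) (Nat.le_add_right l j)
        rw [Nat.add_sub_cancel_left] at h
        exact_mod_cast h
      have h1 : (l+j) - l = j := by omega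
      have h2 : T - (l+j) = (T-l) - j := by omega
      rw [h1, h2]
      calc (T.choose (l+j) : ℝ) * a^(l+j) * (1-a)^((T-l)-j)
            * (((l+j).choose l : ℝ) * b^l * (1-b)^j)
          = ((T.choose (l+j) : ℝ) * ((l+j).choose l : ℝ))
            * (a^(l+j) * (1-a)^((T-l)-j) * b^l * (1-b)^j) := by ring
        _ = ((T.choose l : ℝ) * ((T-l).choose j : ℝ))
            * (a^(l+j) * (1-a)^((T-l)-j) * b^l * (1-b)^j) := by rw [hmul]
        _ = (T.choose l : ℝ) * (a*b)^l
            * ((a*(1-b))^j * (1-a)^((T-l)-j) * ((T-l).choose j : ℝ)) := by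
            rw [pow_add, mul_pow, mul_pow]; ring
    rw [Finset.sum_congr rfl key, ← Finset.mul_sum, ← add_pow,
      show a*(1-b) + (1-a) = 1 - a*b from by ring]
  · intro k hk hk2
    have : k < l := by
      simp only [Finset.mem_Ico] at hk hk2
      omega
    rw [Nat.choose_eq_zero_of_lt this]
    simp


/-- For a positive integer `T` and reals `T ≥ x ≥ y > 0`,
`E[min(x, Bin(T, x/T))]/x ≥ E[min(y, Bin(T, y/T))]/y`. -/
theorem stmt_6 (T : ℕ) (hT : 0 < T) (x y : ℝ) (hy : 0 < y) (hyx : y ≤ x) (hxT : x ≤ T) :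
    truncBinExp T (y / T) y / y ≤ truncBinExp T (x / T) x / x := by
  have hx : 0 < x := hy.trans_le hyx
  have hT' : (0:ℝ) < T := by exact_mod_cast hT
  set a : ℝ := x / T with ha
  set b : ℝ := y / x with hb
  have hab : a * b = y / T := by rw [ha, hb]; field_simp
  have ha0 : 0 ≤ a := by positivity
  have ha1 : a ≤ 1 := by rw [ha, div_le_one hT']; exact hxT
  have hb0 : 0 ≤ b := by positivity
  have hb1 : b ≤ 1 := by rw [hb, div_le_one hx]; exact hyx
  -- nonnegativity of binomial weights
  have hA : ∀ k, 0 ≤ (T.choose k : ℝ) * a^k * (1-a)^(T-k) := fun k => by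
    have : (0:ℝ) ≤ 1 - a := by linarith
    positivity
  have hc : ∀ k l, 0 ≤ (k.choose l : ℝ) * b^l * (1-b)^(k-l) := fun k l => by
    have : (0:ℝ) ≤ 1 - b := by linarith
    positivity
  -- rewrite LHS numerator via thinning
  have expand : truncBinExp T (y/T) y
      = ∑ k ∈ range (T+1), (T.choose k : ℝ) * a^k * (1-a)^(T-k)
          * (∑ l ∈ range (T+1), (k.choose l : ℝ) * b^l * (1-b)^(k-l) * min y l) := by
    unfold truncBinExp
    rw [← hab]
    have : ∀ l ∈ range (T+1),
        (T.choose l : ℝ) * (a*b)^l * (1-a*b)^(T-l) * min y l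
        = ∑ k ∈ range (T+1), (T.choose k : ℝ) * a^k * (1-a)^(T-k)
            * (((k.choose l : ℝ) * b^l * (1-b)^(k-l)) * min y l) := by
      intro l hl
      rw [← thinning T l (by simpa [Nat.lt_succ_iff] using hl) a b, Finset.sum_mul]
      apply Finset.sum_congr rfl
      intro k _
      ring
    rw [Finset.sum_congr rfl this, Finset.sum_comm]
    apply Finset.sum_congr rfl
    intro k _
    rw [Finset.mul_sum]
  -- inner Jensen bound
  have inner_le : ∀ k ∈ range (T+1),
      (∑ l ∈ range (T+1), (k.choose l : ℝ) * b^l * (1-b)^(k-l) * min y l)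
      ≤ (y/x) * min x k := by
    intro k hk
    have hkT : k ≤ T := by simpa [Nat.lt_succ_iff] using hk
    have h1 : (∑ l ∈ range (T+1), (k.choose l : ℝ) * b^l * (1-b)^(k-l) * min y l) ≤ y := by
      calc _ ≤ ∑ l ∈ range (T+1), (k.choose l : ℝ) * b^l * (1-b)^(k-l) * y := by
              apply Finset.sum_le_sum
              intro l _
              exact mul_le_mul_of_nonneg_left (min_le_left _ _) (hc k l)
        _ = y := by rw [← Finset.sum_mul, binom_sum_one k T hkT b, one_mul]
    have h2 : (∑ l ∈ range (T+1), (k.choose l : ℝ) * b^l * (1-b)^(k-l) * min y l)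
        ≤ (k:ℝ) * b := by
      calc _ ≤ ∑ l ∈ range (T+1), (k.choose l : ℝ) * b^l * (1-b)^(k-l) * l := by
              apply Finset.sum_le_sum
              intro l _
              exact mul_le_mul_of_nonneg_left (min_le_right _ _) (hc k l)
        _ = (k:ℝ) * b := binom_sum_mean k T hkT b
    have hkb : (k:ℝ) * b = (y/x) * k := by rw [hb]; ring
    have hyy : y = (y/x) * x := by field_simp
    rcases le_total x (k:ℝ) with h | h
    · rw [min_eq_left h]
      calc _ ≤ y := h1
        _ = (y/x) * x := hyy
    · rw [min_eq_right h]
      calc _ ≤ (k:ℝ) * b := h2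
        _ = (y/x) * k := hkb
  -- combine
  have hS : truncBinExp T (y/T) y ≤ (y/x) * truncBinExp T (x/T) x := by
    rw [expand]
    unfold truncBinExp
    rw [Finset.mul_sum]
    apply Finset.sum_le_sum
    intro k hk
    calc (T.choose k : ℝ) * a^k * (1-a)^(T-k)
          * (∑ l ∈ range (T+1), (k.choose l : ℝ) * b^l * (1-b)^(k-l) * min y l)
        ≤ (T.choose k : ℝ) * a^k * (1-a)^(T-k) * ((y/x) * min x k) :=
          mul_le_mul_of_nonneg_left (inner_le k hk) (hA k)
      _ = y / x * ((T.choose k : ℝ) * (x/T)^k * (1-x/T)^(T-k) * min x k) := by rw [ha]; ring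
  have hEx : 0 ≤ truncBinExp T (x/T) x := by
    unfold truncBinExp
    apply Finset.sum_nonneg
    intro l hl
    have h := hA l
    rw [ha] at h
    have hmin : 0 ≤ min x (l:ℝ) := le_min hx.le (Nat.cast_nonneg l)
    exact mul_nonneg h hmin
  rw [div_le_div_iff₀ hy hx]
  calc truncBinExp T (y/T) y * x ≤ ((y/x) * truncBinExp T (x/T) x) * x :=
        mul_le_mul_of_nonneg_right hS hx.le
    _ = truncBinExp T (x/T) x * y := by field_simp
end

section
/- Let b and T be positive integers with b ≤ T. Then E[min(b, Bin(T, b/T))] ≥ b · (1 + (b/T)^T − (T choose b)·(b/T)^b·(1 − b/T)^{T−b}). -/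
open Finset Nat

lemma prod_sub_range (m : ℕ) : (∏ i ∈ range m, (m - i)) = m ! := by
  induction m with
  | zero => simp
  | succ m ih =>
    rw [Finset.prod_range_succ' (fun i => m + 1 - i) m]
    simp only [Nat.succ_sub_succ]
    rw [ih, Nat.sub_zero, Nat.factorial_succ, mul_comm]

lemma pow_le_choose_mul (T m : ℕ) (h : m ≤ T) : T ^ m ≤ T.choose m * m ^ m := by
  have key : T ^ m * m ! ≤ T.choose m * m ^ m * m ! := by
    calc T ^ m * m ! = ∏ i ∈ range m, (T * (m - i)) := by
          rw [Finset.prod_mul_distrib, Finset.prod_const, prod_sub_range, card_range]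
      _ ≤ ∏ i ∈ range m, ((T - i) * m) := by
          apply Finset.prod_le_prod'
          intro i _
          rw [Nat.mul_sub, Nat.sub_mul]
          exact Nat.sub_le_sub_left (by rw [Nat.mul_comm]; exact Nat.mul_le_mul_right i h) _
      _ = T.descFactorial m * m ^ m := by
          rw [Finset.prod_mul_distrib, Finset.prod_const, card_range,
            Nat.descFactorial_eq_prod_range]
      _ = T.choose m * m ^ m * m ! := by
          rw [Nat.descFactorial_eq_factorial_mul_choose]; ring
  exact Nat.le_of_mul_le_mul_right key m.factorial_pos

lemma tele (T : ℕ) (ρ : ℝ) :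
    ∀ k, k < T →
    ∑ l ∈ range (k + 1), ((T : ℝ) * ρ - l) *
        ((T.choose l : ℝ) * ρ ^ l * (1 - ρ) ^ (T - l))
      = (k + 1 : ℝ) * (1 - ρ) *
        ((T.choose (k + 1) : ℝ) * ρ ^ (k + 1) * (1 - ρ) ^ (T - (k + 1))) := by
  intro k
  induction k with
  | zero =>
    intro h
    have hpow : (1 - ρ) ^ T = (1 - ρ) ^ (T - 1) * (1 - ρ) := by
      rw [← pow_succ]; congr 1; omega
    simp [Nat.choose_one_right, hpow]
    ring
  | succ k ih =>
    intro h
    rw [Finset.sum_range_succ, ih (by omega)]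
    have hc : (T.choose (k + 1 + 1) : ℝ) * ((k : ℝ) + 1 + 1) =
        (T.choose (k + 1) : ℝ) * ((T : ℝ) - ((k : ℝ) + 1)) := by
      have h2 := congrArg (fun n : ℕ => (n : ℝ)) (Nat.choose_succ_right_eq T (k + 1))
      push_cast [Nat.cast_sub (by omega : k + 1 ≤ T)] at h2
      linarith [h2]
    have hpow : (1 - ρ) ^ (T - (k + 1)) = (1 - ρ) * (1 - ρ) ^ (T - (k + 1 + 1)) := by
      rw [mul_comm, ← pow_succ]; congr 1; omega
    rw [hpow]
    push_cast
    linear_combination (-((1 - ρ) ^ (T - (k + 1 + 1)) * ρ ^ (k + 1 + 1)) * (1 - ρ)) * hc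

/-- For positive integers `b ≤ T`,
`E[min(b, Bin(T, b/T))] ≥ b·(1 + (b/T)^T − C(T,b)·(b/T)^b·(1 − b/T)^{T−b})`. -/
theorem stmt_7 (b T : ℕ) (hb : 0 < b) (hbT : b ≤ T) :
    (b : ℝ) * (1 + ((b : ℝ) / T) ^ T
        - (T.choose b : ℝ) * ((b : ℝ) / T) ^ b * (1 - (b : ℝ) / T) ^ (T - b))
      ≤ truncBinExp T ((b : ℝ) / T) b := by
  have hT : 0 < T := lt_of_lt_of_le hb hbT
  have hT' : (0 : ℝ) < T := by exact_mod_cast hT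
  set ρ : ℝ := (b : ℝ) / T with hρ
  have hTρ : (T : ℝ) * ρ = b := by rw [hρ]; field_simp [hT'.ne']
  -- the probabilities sum to one
  have hone : ∑ l ∈ range (T + 1), (T.choose l : ℝ) * ρ ^ l * (1 - ρ) ^ (T - l) = 1 := by
    calc ∑ l ∈ range (T + 1), (T.choose l : ℝ) * ρ ^ l * (1 - ρ) ^ (T - l)
        = (ρ + (1 - ρ)) ^ T := by
          rw [add_pow]; exact Finset.sum_congr rfl fun l _ => by ring
      _ = 1 := by norm_num
  -- telescoping identity
  have htel := tele T ρ (b - 1) (by omega)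
  rw [show b - 1 + 1 = b from by omega, hTρ] at htel
  have hb1 : ((b - 1 : ℕ) : ℝ) + 1 = b := by
    push_cast [Nat.cast_sub hb]; ring
  rw [hb1] at htel
  -- splitting the truncated expectation
  have hsplit : truncBinExp T ρ b
      = (b : ℝ) * (∑ l ∈ range (T + 1), (T.choose l : ℝ) * ρ ^ l * (1 - ρ) ^ (T - l))
        - ∑ l ∈ range b, ((b : ℝ) - l) * ((T.choose l : ℝ) * ρ ^ l * (1 - ρ) ^ (T - l)) := by
    unfold truncBinExp
    have hsub : ∑ l ∈ range b, ((b : ℝ) - l) * ((T.choose l : ℝ) * ρ ^ l * (1 - ρ) ^ (T - l))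
        = ∑ l ∈ range (T + 1),
            ((b : ℝ) * ((T.choose l : ℝ) * ρ ^ l * (1 - ρ) ^ (T - l))
              - (T.choose l : ℝ) * ρ ^ l * (1 - ρ) ^ (T - l) * min (b : ℝ) l) := by
      calc ∑ l ∈ range b, ((b : ℝ) - l) * ((T.choose l : ℝ) * ρ ^ l * (1 - ρ) ^ (T - l))
          = ∑ l ∈ range b,
              ((b : ℝ) * ((T.choose l : ℝ) * ρ ^ l * (1 - ρ) ^ (T - l))
                - (T.choose l : ℝ) * ρ ^ l * (1 - ρ) ^ (T - l) * min (b : ℝ) l) := by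
            refine Finset.sum_congr rfl fun l hl => ?_
            have hlb : (l : ℝ) ≤ b :=
              Nat.cast_le.2 (Finset.mem_range.1 hl).le
            rw [min_eq_right hlb]; ring
        _ = ∑ l ∈ range (T + 1),
              ((b : ℝ) * ((T.choose l : ℝ) * ρ ^ l * (1 - ρ) ^ (T - l))
                - (T.choose l : ℝ) * ρ ^ l * (1 - ρ) ^ (T - l) * min (b : ℝ) l) := by
            refine Finset.sum_subset (Finset.range_subset_range.2 (by omega)) ?_
            intro l _ hl
            have hbl : (b : ℝ) ≤ l :=
              Nat.cast_le.2 (Nat.le_of_not_lt (by simpa using hl))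
            rw [min_eq_left hbl]; ring
    rw [Finset.mul_sum, hsub, ← Finset.sum_sub_distrib]
    exact Finset.sum_congr rfl fun l _ => by ring
  -- the key inequality ρ^T ≤ ρ·p_b
  have hρpos : 0 < ρ := div_pos (by exact_mod_cast hb) hT'
  have hkey : ρ ^ T ≤ ρ * ((T.choose b : ℝ) * ρ ^ b * (1 - ρ) ^ (T - b)) := by
    rcases eq_or_lt_of_le hbT with heq | hlt
    · have hρ1 : ρ = 1 := by rw [hρ, heq]; field_simp
      rw [hρ1, heq]
      simp
    · set m := T - b with hm
      have hm1 : 1 ≤ m := by omega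
      have h1ρ : 1 - ρ = (m : ℝ) / T := by
        rw [hρ, hm]
        push_cast [Nat.cast_sub hbT]
        field_simp
      have hR : b ^ (m - 1) * T ≤ T.choose b * m ^ m := by
        calc b ^ (m - 1) * T ≤ T ^ (m - 1) * T :=
              Nat.mul_le_mul_right T (Nat.pow_le_pow_left hbT _)
          _ = T ^ m := by rw [← pow_succ]; congr 1; omega
          _ ≤ T.choose m * m ^ m := pow_le_choose_mul T m (by omega)
          _ = T.choose b * m ^ m := by rw [hm, Nat.choose_symm hbT]
      have hcast : (b : ℝ) ^ (m - 1) * T ≤ (T.choose b : ℝ) * (m : ℝ) ^ m := by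
        exact_mod_cast hR
      have hmid : ρ ^ (m - 1) ≤ (T.choose b : ℝ) * ((m : ℝ) / T) ^ m := by
        rw [hρ, div_pow, div_pow, ← mul_div_assoc,
          div_le_div_iff₀ (pow_pos hT' _) (pow_pos hT' _)]
        have hTm : (T : ℝ) ^ m = T ^ (m - 1) * T := by rw [← pow_succ]; congr 1; omega
        calc (b : ℝ) ^ (m - 1) * (T : ℝ) ^ m = ((b : ℝ) ^ (m - 1) * T) * T ^ (m - 1) := by
              rw [hTm]; ring
          _ ≤ ((T.choose b : ℝ) * (m : ℝ) ^ m) * T ^ (m - 1) :=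
              mul_le_mul_of_nonneg_right hcast (by positivity)
          _ = (T.choose b : ℝ) * (m : ℝ) ^ m * T ^ (m - 1) := by ring
      have hpowT : ρ ^ T = ρ ^ (b + 1) * ρ ^ (m - 1) := by
        rw [← pow_add]; congr 1; omega
      rw [h1ρ, hm]
      calc ρ ^ T = ρ ^ (b + 1) * ρ ^ (m - 1) := hpowT
        _ ≤ ρ ^ (b + 1) * ((T.choose b : ℝ) * ((m : ℝ) / T) ^ m) :=
            mul_le_mul_of_nonneg_left hmid (by positivity)
        _ = ρ * ((T.choose b : ℝ) * ρ ^ b * ((m : ℝ) / T) ^ m) := by ring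
  rw [hsplit, hone, htel]
  nlinarith [mul_le_mul_of_nonneg_left hkey (by positivity : (0 : ℝ) ≤ (b : ℝ))]
end

section
/- For every positive integer b, the limit as T → ∞ (over positive integers T ≥ b) of E[min(b, Bin(T, b/T))] / b exists and equals 1 − (b^b / b!)·e^{−b}. -/
open Filter Finset Real

lemma aux_term (b l : ℕ) :
    Tendsto (fun T : ℕ => (T.choose l : ℝ) * ((b : ℝ) / T) ^ l * (1 - (b : ℝ) / T) ^ (T - l))
      atTop (nhds (Real.exp (-(b : ℝ)) * (b : ℝ) ^ l / l.factorial)) := by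
  have hA : Tendsto (fun T : ℕ => ∏ i ∈ range l, (1 - (i : ℝ) / T)) atTop (nhds 1) := by
    have := tendsto_finset_prod (f := fun (i : ℕ) (T : ℕ) => (1 : ℝ) - (i : ℝ) / T)
      (a := fun _ => (1 : ℝ)) (range l) (fun i _ => by
        simpa using tendsto_const_nhds.sub (tendsto_const_div_atTop_nhds_zero_nat (i : ℝ)))
    simpa using this
  have hB : Tendsto (fun T : ℕ => (1 - (b : ℝ) / T) ^ T) atTop (nhds (Real.exp (-(b : ℝ)))) := by
    have := Real.tendsto_one_add_div_pow_exp (-(b : ℝ))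
    simpa [sub_eq_add_neg, neg_div] using this
  have h1 : Tendsto (fun T : ℕ => 1 - (b : ℝ) / T) atTop (nhds 1) := by
    simpa using tendsto_const_nhds.sub (tendsto_const_div_atTop_nhds_zero_nat (b : ℝ))
  have hC : Tendsto (fun T : ℕ => (1 - (b : ℝ) / T) ^ l) atTop (nhds 1) := by
    simpa using h1.pow l
  have hmain := ((hA.mul hB).div hC one_ne_zero).const_mul ((b : ℝ) ^ l / l.factorial)
  have hmain' : Tendsto (fun T : ℕ => (b : ℝ) ^ l / l.factorial *
      ((∏ i ∈ range l, (1 - (i : ℝ) / T)) * (1 - (b : ℝ) / T) ^ T / (1 - (b : ℝ) / T) ^ l))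
      atTop (nhds (Real.exp (-(b : ℝ)) * (b : ℝ) ^ l / l.factorial)) := by
    convert hmain using 2
    · simp only [Pi.div_apply]
    · ring
  refine hmain'.congr' ?_
  filter_upwards [eventually_ge_atTop (max l (b + 1))] with T hT
  have hl : l ≤ T := le_trans (le_max_left _ _) hT
  have hbT : b < T := lt_of_lt_of_le (Nat.lt_succ_self b) (le_trans (le_max_right _ _) hT)
  have hT0 : (0 : ℝ) < T := by
    have : 0 < T := by omega
    exact_mod_cast this
  have hne : (1 : ℝ) - (b : ℝ) / T ≠ 0 := by
    have hlt : (b : ℝ) / T < 1 := by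
      rw [div_lt_one hT0]
      exact_mod_cast hbT
    linarith
  have hchoose : (T.choose l : ℝ) = (∏ i ∈ range l, ((T : ℝ) - i)) / l.factorial := by
    have h1 : (T.descFactorial l : ℝ) = ∏ i ∈ range l, ((T : ℝ) - i) := by
      rw [Nat.descFactorial_eq_prod_range, Nat.cast_prod]
      refine Finset.prod_congr rfl fun i hi => ?_
      have : i ≤ T := le_trans (Finset.mem_range.1 hi).le hl
      push_cast [Nat.cast_sub this]
      ring
    rw [eq_div_iff (by exact_mod_cast l.factorial_ne_zero)]
    rw [← h1, Nat.descFactorial_eq_factorial_mul_choose]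
    push_cast
    ring
  have hprod : ∏ i ∈ range l, (1 - (i : ℝ) / T) = (∏ i ∈ range l, ((T : ℝ) - i)) / (T : ℝ) ^ l := by
    calc ∏ i ∈ range l, (1 - (i : ℝ) / T) = ∏ i ∈ range l, (((T : ℝ) - i) / T) :=
          Finset.prod_congr rfl fun i _ => by field_simp
      _ = (∏ i ∈ range l, ((T : ℝ) - i)) / (T : ℝ) ^ l := by
          rw [Finset.prod_div_distrib, Finset.prod_const, Finset.card_range]
  have hpow : (1 - (b : ℝ) / T) ^ (T - l) =
      (1 - (b : ℝ) / T) ^ T * ((1 - (b : ℝ) / T) ^ l)⁻¹ := pow_sub₀ _ hne hl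
  rw [hprod, hchoose, hpow, div_pow]
  field_simp

lemma aux_rep (b T : ℕ) (hb : 0 < b) (hbT : b ≤ T) :
    truncBinExp T ((b : ℝ) / T) b = (b : ℝ) -
      ∑ l ∈ range b, (T.choose l : ℝ) * ((b : ℝ) / T) ^ l * (1 - (b : ℝ) / T) ^ (T - l)
        * ((b : ℝ) - l) := by
  set ρ : ℝ := (b : ℝ) / T with hρ
  have hsum1 : ∑ l ∈ range (T + 1), (T.choose l : ℝ) * ρ ^ l * (1 - ρ) ^ (T - l) = 1 := by
    calc ∑ l ∈ range (T + 1), (T.choose l : ℝ) * ρ ^ l * (1 - ρ) ^ (T - l)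
        = ∑ l ∈ range (T + 1), ρ ^ l * (1 - ρ) ^ (T - l) * (T.choose l : ℝ) :=
          Finset.sum_congr rfl fun l _ => by ring
      _ = (ρ + (1 - ρ)) ^ T := (add_pow ρ (1 - ρ) T).symm
      _ = 1 := by norm_num
  have hsplit : ∑ l ∈ range (T + 1),
      (T.choose l : ℝ) * ρ ^ l * (1 - ρ) ^ (T - l) * ((b : ℝ) - min (b : ℝ) (l : ℝ)) =
      ∑ l ∈ range b, (T.choose l : ℝ) * ρ ^ l * (1 - ρ) ^ (T - l) * ((b : ℝ) - l) := by
    rw [← Finset.sum_subset (Finset.range_subset_range.2 (by omega : b ≤ T + 1))]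
    · refine Finset.sum_congr rfl fun l hl => ?_
      have hlb : (l : ℝ) ≤ (b : ℝ) := by exact_mod_cast (Finset.mem_range.1 hl).le
      rw [min_eq_right hlb]
    · intro l _ hl
      have hbl : (b : ℝ) ≤ (l : ℝ) := by
        exact_mod_cast le_of_not_gt (fun h => hl (Finset.mem_range.2 h))
      rw [min_eq_left hbl, sub_self, mul_zero]
  have key : truncBinExp T ρ b =
      (∑ l ∈ range (T + 1), (T.choose l : ℝ) * ρ ^ l * (1 - ρ) ^ (T - l)) * (b : ℝ) -
      ∑ l ∈ range (T + 1),
        (T.choose l : ℝ) * ρ ^ l * (1 - ρ) ^ (T - l) * ((b : ℝ) - min (b : ℝ) (l : ℝ)) := by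
    rw [truncBinExp, Finset.sum_mul, ← Finset.sum_sub_distrib]
    exact Finset.sum_congr rfl fun l _ => by ring
  rw [key, hsum1, one_mul, hsplit]

/-- For every positive integer `b`, as `T → ∞`,
`E[min(b, Bin(T, b/T))] / b → 1 − (b^b / b!)·e^{−b}`. -/
theorem stmt_8 (b : ℕ) (hb : 0 < b) :
    Filter.Tendsto (fun T : ℕ => truncBinExp T ((b : ℝ) / T) b / b) Filter.atTop
      (nhds (1 - (b : ℝ) ^ b / (Nat.factorial b) * Real.exp (-(b : ℝ)))) := by
  have hb' : (b : ℝ) ≠ 0 := by exact_mod_cast hb.ne'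
  have hS : Tendsto (fun T : ℕ => ∑ l ∈ range b,
      (T.choose l : ℝ) * ((b : ℝ) / T) ^ l * (1 - (b : ℝ) / T) ^ (T - l) * ((b : ℝ) - l))
      atTop (nhds (∑ l ∈ range b, Real.exp (-(b : ℝ)) * (b : ℝ) ^ l / l.factorial * ((b : ℝ) - l))) :=
    tendsto_finset_sum _ fun l _ => (aux_term b l).mul_const _
  have hval : ∑ l ∈ range b, Real.exp (-(b : ℝ)) * (b : ℝ) ^ l / l.factorial * ((b : ℝ) - l) =
      Real.exp (-(b : ℝ)) * ((b : ℝ) * (b : ℝ) ^ b / b.factorial) := by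
    have htel : ∑ l ∈ range b,
        (((l : ℝ) + 1) * (b : ℝ) ^ (l + 1) / (l + 1).factorial - (l : ℝ) * (b : ℝ) ^ l / l.factorial)
        = (b : ℝ) * (b : ℝ) ^ b / b.factorial := by
      have h := Finset.sum_range_sub (fun l => (l : ℝ) * (b : ℝ) ^ l / l.factorial) b
      push_cast at h
      simpa using h
    calc ∑ l ∈ range b, Real.exp (-(b : ℝ)) * (b : ℝ) ^ l / l.factorial * ((b : ℝ) - l)
        = ∑ l ∈ range b, Real.exp (-(b : ℝ)) *
            (((l : ℝ) + 1) * (b : ℝ) ^ (l + 1) / (l + 1).factorial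
              - (l : ℝ) * (b : ℝ) ^ l / l.factorial) := by
          refine Finset.sum_congr rfl fun l _ => ?_
          have hfac : ((l + 1).factorial : ℝ) = ((l : ℝ) + 1) * l.factorial := by
            rw [Nat.factorial_succ]; push_cast; ring
          have hf0 : (l.factorial : ℝ) ≠ 0 := by exact_mod_cast l.factorial_ne_zero
          rw [hfac]
          field_simp
          ring
      _ = Real.exp (-(b : ℝ)) * ((b : ℝ) * (b : ℝ) ^ b / b.factorial) := by
          rw [← Finset.mul_sum, htel]
  have hmain : Tendsto (fun T : ℕ => 1 - (∑ l ∈ range b,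
      (T.choose l : ℝ) * ((b : ℝ) / T) ^ l * (1 - (b : ℝ) / T) ^ (T - l) * ((b : ℝ) - l)) / b)
      atTop (nhds (1 - (b : ℝ) ^ b / (Nat.factorial b) * Real.exp (-(b : ℝ)))) := by
    have := (tendsto_const_nhds (x := (1 : ℝ)) (f := atTop (α := ℕ))).sub (hS.div_const (b : ℝ))
    convert this using 2
    rw [hval]
    field_simp
  refine hmain.congr' ?_
  filter_upwards [eventually_ge_atTop b] with T hT
  rw [aux_rep b T hb hT]
  field_simp
end

section
/- Fix a real b ≥ 0, a positive integer T, and an index t ∈ {1, …, T−1}. Let Q_1, …, Q_T be independent random variables taking values in [0,1], and let p_1, …, p_T ≥ 0 be per-period prices with p_t ≤ p_{t+1}. Let (p', Q') be obtained from (p, Q) by exchanging the entries at positions t and t+1 in both the price sequence and the demand sequence. Then E[Rev(p', Q'; b)] ≥ E[Rev(p, Q; b)]. -/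
open MeasureTheory ProbabilityTheory

/-- Single-item revenue with inventory truncation: with initial inventory `b`, per-period prices
`P 0, …, P (T-1)` and demands `Q 0, …, Q (T-1)` (periods indexed from `0`), the revenue is
`Σ_t P t · (min b S_{t+1} − min b S_t)` where `S_t = Q 0 + ⋯ + Q (t-1)`. -/
noncomputable def singleItemRev (b : ℝ) (T : ℕ) (P Q : ℕ → ℝ) : ℝ :=
  ∑ t ∈ Finset.range T,
    P t * (min b (∑ s ∈ Finset.range (t + 1), Q s) - min b (∑ s ∈ Finset.range t, Q s))

lemma min_lip (b x y : ℝ) : |min b x - min b y| ≤ |x - y| := by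
  rw [abs_sub_le_iff]
  constructor <;> simp only [min_def] <;> split_ifs <;>
    nlinarith [le_abs_self (x - y), neg_abs_le (x - y), abs_nonneg (x - y)]

lemma min_concave (b s a c : ℝ) (ha : 0 ≤ a) (hc : 0 ≤ c) :
    min b s + min b (s + a + c) ≤ min b (s + a) + min b (s + c) := by
  simp only [min_def]; split_ifs <;> linarith

lemma swap_sum (q : ℕ → ℝ) (t n : ℕ) (h : n ≤ t ∨ t + 1 < n) :
    ∑ r ∈ Finset.range n, q (Equiv.swap t (t + 1) r) = ∑ r ∈ Finset.range n, q r := by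
  rcases h with h | h
  · refine Finset.sum_congr rfl fun r hr => ?_
    have hr' := Finset.mem_range.1 hr
    rw [Equiv.swap_apply_of_ne_of_ne (by omega) (by omega)]
  · refine Finset.sum_equiv (Equiv.swap t (t + 1)) (fun i => ?_) (fun i _ => rfl)
    by_cases h1 : i = t
    · simp [h1, Equiv.swap_apply_left, Finset.mem_range]; omega
    by_cases h2 : i = t + 1
    · simp [h2, Equiv.swap_apply_right, Finset.mem_range]; omega
    · rw [Equiv.swap_apply_of_ne_of_ne h1 h2]

lemma key_pointwise (b : ℝ) (T : ℕ) (t : ℕ) (ht : t + 1 < T) (p q : ℕ → ℝ)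
    (hp0 : 0 ≤ p t) (hpt : p t ≤ p (t + 1)) (hqt : 0 ≤ q t) (hqt1 : 0 ≤ q (t + 1)) :
    singleItemRev b T p q
      ≤ singleItemRev b T (fun s => p (Equiv.swap t (t + 1) s))
          (fun s => q (Equiv.swap t (t + 1) s)) := by
  unfold singleItemRev
  set g : ℕ → ℝ := fun s =>
    p s * (min b (∑ r ∈ Finset.range (s + 1), q r) - min b (∑ r ∈ Finset.range s, q r)) with hg
  set g' : ℕ → ℝ := fun s =>
    p (Equiv.swap t (t + 1) s) *
      (min b (∑ r ∈ Finset.range (s + 1), q (Equiv.swap t (t + 1) r)) -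
        min b (∑ r ∈ Finset.range s, q (Equiv.swap t (t + 1) r))) with hg'
  have hmem1 : t + 1 ∈ Finset.range T := Finset.mem_range.2 ht
  have hmem2 : t ∈ (Finset.range T).erase (t + 1) :=
    Finset.mem_erase.2 ⟨by omega, Finset.mem_range.2 (by omega)⟩
  rw [← Finset.sum_erase_add _ g hmem1, ← Finset.sum_erase_add _ g hmem2,
      ← Finset.sum_erase_add _ g' hmem1, ← Finset.sum_erase_add _ g' hmem2]
  have hcong : ∑ s ∈ ((Finset.range T).erase (t + 1)).erase t, g s
      = ∑ s ∈ ((Finset.range T).erase (t + 1)).erase t, g' s := by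
    refine Finset.sum_congr rfl fun s hs => ?_
    have h1 : s ≠ t := (Finset.mem_erase.1 hs).1
    have h2 : s ≠ t + 1 := (Finset.mem_erase.1 (Finset.mem_erase.1 hs).2).1
    simp only [hg, hg', Equiv.swap_apply_of_ne_of_ne h1 h2,
      swap_sum q t s (by omega), swap_sum q t (s + 1) (by omega)]
  rw [hcong]
  have hsum_t : ∑ r ∈ Finset.range t, q (Equiv.swap t (t + 1) r)
      = ∑ r ∈ Finset.range t, q r := swap_sum q t t (Or.inl le_rfl)
  have hsum_t1 : ∑ r ∈ Finset.range (t + 1), q (Equiv.swap t (t + 1) r)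
      = (∑ r ∈ Finset.range t, q r) + q (t + 1) := by
    rw [Finset.sum_range_succ, hsum_t, Equiv.swap_apply_left]
  have hsum_t2 : ∑ r ∈ Finset.range (t + 2), q (Equiv.swap t (t + 1) r)
      = ∑ r ∈ Finset.range (t + 2), q r := swap_sum q t (t + 2) (Or.inr (by omega))
  have hS1 : ∑ r ∈ Finset.range (t + 1), q r = (∑ r ∈ Finset.range t, q r) + q t :=
    Finset.sum_range_succ q t
  have hS2 : ∑ r ∈ Finset.range (t + 2), q r
      = (∑ r ∈ Finset.range t, q r) + q t + q (t + 1) := by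
    rw [Finset.sum_range_succ, hS1]
  have hconc := min_concave b (∑ r ∈ Finset.range t, q r) (q t) (q (t + 1)) hqt hqt1
  have hgt : g t + g (t + 1) ≤ g' t + g' (t + 1) := by
    simp only [hg, hg', Equiv.swap_apply_left, Equiv.swap_apply_right, hsum_t, hsum_t1,
      hsum_t2, hS1, hS2]
    nlinarith [mul_nonneg (sub_nonneg.2 hpt) (sub_nonneg.2 hconc)]
  linarith

lemma rev_meas {Ω : Type*} [MeasurableSpace Ω] (b : ℝ) (T : ℕ) (p : ℕ → ℝ) (R : ℕ → Ω → ℝ)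
    (h : ∀ s, s < T → Measurable (R s)) :
    Measurable (fun ω => singleItemRev b T p (fun s => R s ω)) := by
  unfold singleItemRev
  apply Finset.measurable_sum
  intro s hs
  have hs' := Finset.mem_range.1 hs
  have hm : ∀ n, n ≤ T → Measurable (fun ω => ∑ r ∈ Finset.range n, R r ω) := fun n hn =>
    Finset.measurable_sum _ fun r hr => h r (lt_of_lt_of_le (Finset.mem_range.1 hr) hn)
  exact measurable_const.mul
    ((measurable_const.min (hm (s + 1) (by omega))).sub (measurable_const.min (hm s (by omega))))

lemma rev_bound (b : ℝ) (T : ℕ) (p q : ℕ → ℝ) (h : ∀ s, s < T → |q s| ≤ 1) :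
    |singleItemRev b T p q| ≤ ∑ s ∈ Finset.range T, |p s| := by
  refine (Finset.abs_sum_le_sum_abs _ _).trans (Finset.sum_le_sum fun s hs => ?_)
  rw [abs_mul]
  have hlip := min_lip b (∑ r ∈ Finset.range (s + 1), q r) (∑ r ∈ Finset.range s, q r)
  have heq : (∑ r ∈ Finset.range (s + 1), q r) - ∑ r ∈ Finset.range s, q r = q s := by
    rw [Finset.sum_range_succ]; ring
  rw [heq] at hlip
  calc |p s| * |min b (∑ r ∈ Finset.range (s + 1), q r) - min b (∑ r ∈ Finset.range s, q r)|
      ≤ |p s| * 1 := mul_le_mul_of_nonneg_left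
        (hlip.trans (h s (Finset.mem_range.1 hs))) (abs_nonneg _)
    _ = |p s| := mul_one _

/-- exchanging two consecutive price–demand pairs with `p_t ≤ p_{t+1}` (so that
the larger price comes first) does not decrease the expected revenue. Periods are indexed
`0, …, T-1`, and the exchanged positions are `t` and `t+1` with `t + 1 < T`. -/
theorem stmt_10 {Ω : Type*} [MeasurableSpace Ω] (μ : Measure Ω) [IsProbabilityMeasure μ]
    (b : ℝ) (hb : 0 ≤ b) (T : ℕ) (hT : 0 < T) (t : ℕ) (ht : t + 1 < T)
    (Q : ℕ → Ω → ℝ)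
    (hQmeas : ∀ s, s < T → Measurable (Q s))
    (hQindep : iIndepFun (fun s : Fin T => Q s) μ)
    (hQrange : ∀ s, s < T → ∀ ω, Q s ω ∈ Set.Icc (0 : ℝ) 1)
    (p : ℕ → ℝ) (hpnonneg : ∀ s, s < T → 0 ≤ p s) (hpt : p t ≤ p (t + 1)) :
    ∫ ω, singleItemRev b T p (fun s => Q s ω) ∂μ
      ≤ ∫ ω, singleItemRev b T (fun s => p (Equiv.swap t (t + 1) s))
          (fun s => Q (Equiv.swap t (t + 1) s) ω) ∂μ := by
  have hswap : ∀ s, s < T → Equiv.swap t (t + 1) s < T := by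
    intro s hs
    by_cases h1 : s = t
    · simp only [h1, Equiv.swap_apply_left]; omega
    by_cases h2 : s = t + 1
    · simp only [h2, Equiv.swap_apply_right]; omega
    · rw [Equiv.swap_apply_of_ne_of_ne h1 h2]; exact hs
  have habs : ∀ s, s < T → ∀ ω, |Q s ω| ≤ 1 := fun s hs ω => by
    have h := hQrange s hs ω
    rw [abs_le]; exact ⟨by linarith [h.1], h.2⟩
  have hint1 : Integrable (fun ω => singleItemRev b T p (fun s => Q s ω)) μ := by
    refine Integrable.mono' (integrable_const (∑ s ∈ Finset.range T, |p s|))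
      (rev_meas b T p Q hQmeas).aestronglyMeasurable (ae_of_all _ fun ω => ?_)
    exact rev_bound b T p _ fun s hs => habs s hs ω
  have hint2 : Integrable (fun ω => singleItemRev b T (fun s => p (Equiv.swap t (t + 1) s))
      (fun s => Q (Equiv.swap t (t + 1) s) ω)) μ := by
    refine Integrable.mono'
      (integrable_const (∑ s ∈ Finset.range T, |p (Equiv.swap t (t + 1) s)|))
      (rev_meas b T _ (fun s => Q (Equiv.swap t (t + 1) s))
        (fun s hs => hQmeas _ (hswap s hs))).aestronglyMeasurable
      (ae_of_all _ fun ω => rev_bound b T _ _ fun s hs => habs _ (hswap s hs) ω)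
  refine integral_mono hint1 hint2 fun ω => ?_
  exact key_pointwise b T t ht p (fun s => Q s ω) (hpnonneg t (by omega)) hpt
    (hQrange t (by omega) ω).1 (hQrange (t + 1) ht ω).1
end

section
/- Fix a real b ≥ 0 and a positive integer T. Let Q_1, …, Q_T be independent random variables taking values in [0,1] and let p_1, …, p_T ≥ 0 be per-period prices. Let σ be any permutation of {1, …, T} such that p_{σ(1)} ≥ p_{σ(2)} ≥ … ≥ p_{σ(T)}. Then E[Rev((p_{σ(t)})_{t=1}^T, (Q_{σ(t)})_{t=1}^T; b)] ≥ E[Rev(p, Q; b)]; that is, permuting the price–demand pairs so that prices are non-increasing over time does not decrease the expected revenue. -/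
open MeasureTheory ProbabilityTheory

namespace Stmt11Aux

open Finset

/-- per-period sold quantity -/
noncomputable def Dlt (b : ℝ) (q : ℕ → ℝ) (t : ℕ) : ℝ :=
  min b (∑ s ∈ range (t+1), q s) - min b (∑ s ∈ range t, q s)

lemma sum_Dlt (b : ℝ) (hb : 0 ≤ b) (q : ℕ → ℝ) (K : ℕ) :
    ∑ t ∈ range K, Dlt b q t = min b (∑ s ∈ range K, q s) := by
  simp only [Dlt]
  rw [Finset.sum_range_sub (fun t => min b (∑ s ∈ range t, q s))]
  simp [hb]

lemma Dlt_nonneg (b : ℝ) (q : ℕ → ℝ) (t : ℕ) (hqt : 0 ≤ q t) : 0 ≤ Dlt b q t := by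
  have : (∑ s ∈ range t, q s) ≤ ∑ s ∈ range (t+1), q s := by
    rw [Finset.sum_range_succ]; linarith
  have := min_le_min (le_refl b) this
  simpa [Dlt] using this

lemma Dlt_le (b : ℝ) (q : ℕ → ℝ) (t : ℕ) (hqt : 0 ≤ q t) : Dlt b q t ≤ q t := by
  have h1 : min b (∑ s ∈ range (t+1), q s) ≤ min b (∑ s ∈ range t, q s) + q t := by
    rw [Finset.sum_range_succ]
    rcases le_total b (∑ s ∈ range t, q s) with h | h
    · calc min b (∑ s ∈ range t, q s + q t) ≤ b := min_le_left _ _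
        _ ≤ min b (∑ s ∈ range t, q s) + q t := by rw [min_eq_left h]; linarith
    · calc min b (∑ s ∈ range t, q s + q t) ≤ ∑ s ∈ range t, q s + q t := min_le_right _ _
        _ = min b (∑ s ∈ range t, q s) + q t := by rw [min_eq_right h]
  simp only [Dlt]; linarith

/-- sold quantity over any subset of periods is at most `min b (total demand over subset)` -/
lemma sum_Dlt_le (b : ℝ) (hb : 0 ≤ b) (T : ℕ) (q : ℕ → ℝ) (hq : ∀ s, s < T → 0 ≤ q s)
    (A : Finset ℕ) (hA : A ⊆ range T) :
    ∑ t ∈ A, Dlt b q t ≤ min b (∑ t ∈ A, q t) := by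
  refine le_min ?_ ?_
  · calc ∑ t ∈ A, Dlt b q t ≤ ∑ t ∈ range T, Dlt b q t := by
          refine Finset.sum_le_sum_of_subset_of_nonneg hA ?_
          intro t ht _; exact Dlt_nonneg b q t (hq t (mem_range.mp ht))
      _ = min b (∑ s ∈ range T, q s) := sum_Dlt b hb q T
      _ ≤ b := min_le_left _ _
  · refine Finset.sum_le_sum ?_
    intro t ht; exact Dlt_le b q t (hq t (mem_range.mp (hA ht)))

/-- decomposition of a price value over the sorted price levels -/
lemma price_decomp (T : ℕ) (c : ℕ → ℝ) (hanti : Antitone c) (hcT : c T = 0)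
    (v : ℝ) (j : ℕ) (hj : j < T) (hv : c j = v) :
    v = ∑ k ∈ range T, (c k - c (k+1)) * (if c k ≤ v then 1 else 0) := by
  have hex : ∃ k, c k ≤ v := ⟨j, le_of_eq hv⟩
  set j0 := Nat.find hex with hj0
  have hj0le : j0 ≤ j := Nat.find_min' hex (le_of_eq hv)
  have hj0v : c j0 = v := le_antisymm (Nat.find_spec hex) (hv ▸ hanti hj0le)
  have hfilter : (range T).filter (fun k => c k ≤ v) = Ico j0 T := by
    ext k
    simp only [mem_filter, mem_range, mem_Ico]
    constructor
    · rintro ⟨hkT, hk⟩; exact ⟨Nat.find_min' hex hk, hkT⟩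
    · rintro ⟨h1, h2⟩; exact ⟨h2, le_trans (hanti h1) (le_of_eq hj0v)⟩
  have : ∑ k ∈ range T, (c k - c (k+1)) * (if c k ≤ v then 1 else 0)
      = ∑ k ∈ Ico j0 T, (c k - c (k+1)) := by
    rw [← hfilter, Finset.sum_filter]
    refine Finset.sum_congr rfl ?_
    intro k _; split <;> ring
  rw [this]
  have htel : ∑ k ∈ Ico j0 T, (c (k+1) - c k) = c T - c j0 := by
    have h1 : ∑ k ∈ range T, (c (k+1) - c k) = c T - c 0 := Finset.sum_range_sub c T
    have h2 : ∑ k ∈ range j0, (c (k+1) - c k) = c j0 - c 0 := Finset.sum_range_sub c j0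
    have hle : j0 ≤ T := le_trans hj0le (le_of_lt hj)
    rw [Finset.sum_Ico_eq_sub _ hle, h1, h2]; ring
  have : ∑ k ∈ Ico j0 T, (c k - c (k+1)) = -(∑ k ∈ Ico j0 T, (c (k+1) - c k)) := by
    rw [← Finset.sum_neg_distrib]; refine Finset.sum_congr rfl ?_; intro k _; ring
  rw [this, htel, hcT, hj0v]; ring

/-- rewrite a revenue-type sum over price levels -/
lemma rev_decomp (T : ℕ) (c : ℕ → ℝ) (hanti : Antitone c) (hcT : c T = 0)
    (r : ℕ → ℝ) (hr : ∀ t, t < T → ∃ j, j < T ∧ c j = r t) (d : ℕ → ℝ) :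
    ∑ t ∈ range T, r t * d t
      = ∑ k ∈ range T, (c k - c (k+1)) * ∑ t ∈ (range T).filter (fun t => c k ≤ r t), d t := by
  have h1 : ∀ t ∈ range T,
      r t * d t = ∑ k ∈ range T, (c k - c (k+1)) * (if c k ≤ r t then d t else 0) := by
    intro t ht
    obtain ⟨j, hj, hv⟩ := hr t (mem_range.mp ht)
    calc r t * d t
        = (∑ k ∈ range T, (c k - c (k+1)) * (if c k ≤ r t then 1 else 0)) * d t := by
          rw [← price_decomp T c hanti hcT (r t) j hj hv]
      _ = ∑ k ∈ range T, (c k - c (k+1)) * (if c k ≤ r t then d t else 0) := by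
          rw [Finset.sum_mul]
          refine Finset.sum_congr rfl ?_
          intro k _; split <;> ring
  rw [Finset.sum_congr rfl h1, Finset.sum_comm]
  refine Finset.sum_congr rfl ?_
  intro k _
  rw [Finset.mul_sum, Finset.sum_filter]
  refine Finset.sum_congr rfl ?_
  intro t _; split <;> ring

/-- the key deterministic inequality: sorting prices non-increasingly can only help,
pointwise in the demand realization. -/
lemma sorted_rev_ge (b : ℝ) (hb : 0 ≤ b) (T : ℕ)
    (q : ℕ → ℝ) (hq : ∀ s, s < T → 0 ≤ q s)
    (p : ℕ → ℝ) (hp : ∀ s, s < T → 0 ≤ p s)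
    (σ : Equiv.Perm ℕ) (hσfix : ∀ s, T ≤ s → σ s = s)
    (hsorted : ∀ s s' : ℕ, s ≤ s' → s' < T → p (σ s') ≤ p (σ s)) :
    singleItemRev b T p q ≤ singleItemRev b T (fun s => p (σ s)) (fun s => q (σ s)) := by
  -- σ maps [0,T) to itself
  have hσlt : ∀ s, s < T → σ s < T := by
    intro s hs
    by_contra h
    push_neg at h
    have := σ.injective (hσfix (σ s) h)
    omega
  have hσ'lt : ∀ t, t < T → σ.symm t < T := by
    intro t ht
    by_contra h
    push_neg at h
    have h2 : σ (σ.symm t) = σ.symm t := hσfix _ h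
    rw [Equiv.apply_symm_apply] at h2
    omega
  -- sorted price sequence, extended by 0
  set c : ℕ → ℝ := fun k => if k < T then p (σ k) else 0 with hc
  have hcT : c T = 0 := by simp [hc]
  have hanti : Antitone c := by
    intro j k hjk
    simp only [hc]
    by_cases hk : k < T
    · have hj : j < T := lt_of_le_of_lt hjk hk
      simp only [hj, hk, if_true]
      exact hsorted j k hjk hk
    · by_cases hj : j < T
      · simp only [hj, hk, if_true, if_false]
        exact hp (σ j) (hσlt j hj)
      · simp [hj, hk]
  -- rewrite both revenues
  have hrevL : singleItemRev b T p q = ∑ t ∈ range T, p t * Dlt b q t := rfl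
  have hrevR : singleItemRev b T (fun s => p (σ s)) (fun s => q (σ s))
      = ∑ t ∈ range T, p (σ t) * Dlt b (fun s => q (σ s)) t := rfl
  rw [hrevL, hrevR]
  rw [rev_decomp T c hanti hcT p (fun t ht => ⟨σ.symm t, hσ'lt t ht, by
        simp [hc, hσ'lt t ht]⟩) (Dlt b q)]
  rw [rev_decomp T c hanti hcT (fun t => p (σ t)) (fun t ht => ⟨t, ht, by simp [hc, ht]⟩)
        (Dlt b (fun s => q (σ s)))]
  refine Finset.sum_le_sum ?_
  intro k hk
  have hcoef : 0 ≤ c k - c (k+1) := sub_nonneg.2 (hanti (Nat.le_succ k))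
  refine mul_le_mul_of_nonneg_left ?_ hcoef
  -- the filtered set on the sorted side is an initial segment `range K`
  set A : Finset ℕ := (range T).filter (fun t => c k ≤ p t) with hA
  set A' : Finset ℕ := (range T).filter (fun t => c k ≤ p (σ t)) with hA'
  have hexK : ∃ s, ¬(s < T ∧ c k ≤ c s) := ⟨T, by simp⟩
  set K : ℕ := Nat.find hexK with hK
  have hA'K : A' = range K := by
    ext s
    simp only [hA', mem_filter, mem_range]
    constructor
    · rintro ⟨hsT, hs⟩
      by_contra hcon
      push_neg at hcon
      have hspec := Nat.find_spec hexK
      rw [← hK] at hspec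
      have hKT : K < T := lt_of_le_of_lt hcon hsT
      have : c k ≤ c K := le_trans (by simpa [hc, hsT] using hs) (hanti hcon)
      exact hspec ⟨hKT, this⟩
    · intro hsK
      have h := Nat.find_min hexK (m := s) (by rw [← hK]; exact hsK)
      push_neg at h
      refine ⟨h.1, ?_⟩
      simpa [hc, h.1] using h.2
  -- total demand over `A'` equals total demand over `A`
  have hsum : ∑ t ∈ A', q (σ t) = ∑ t ∈ A, q t := by
    refine Finset.sum_equiv σ ?_ ?_
    · intro i
      simp only [hA, hA', mem_filter, mem_range]
      constructor
      · rintro ⟨hiT, hi⟩; exact ⟨hσlt i hiT, hi⟩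
      · rintro ⟨hiT, hi⟩
        refine ⟨?_, hi⟩
        by_contra hcon
        push_neg at hcon
        have := hσfix i hcon
        omega
    · intro i _; rfl
  -- conclude
  calc ∑ t ∈ A, Dlt b q t ≤ min b (∑ t ∈ A, q t) :=
        sum_Dlt_le b hb T q hq A (Finset.filter_subset _ _)
    _ = min b (∑ t ∈ A', q (σ t)) := by rw [hsum]
    _ = ∑ t ∈ A', Dlt b (fun s => q (σ s)) t := by
        rw [hA'K, sum_Dlt b hb (fun s => q (σ s)) K]

end Stmt11Aux

/-- permuting the price–demand pairs by a permutation `σ` of the periods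
`{0, …, T-1}` (fixing all other indices) so that the permuted prices are non-increasing over
time does not decrease the expected revenue. -/
theorem stmt_11 {Ω : Type*} [MeasurableSpace Ω] (μ : Measure Ω) [IsProbabilityMeasure μ]
    (b : ℝ) (hb : 0 ≤ b) (T : ℕ) (hT : 0 < T)
    (Q : ℕ → Ω → ℝ)
    (hQmeas : ∀ s, s < T → Measurable (Q s))
    (hQindep : iIndepFun (fun s : Fin T => Q s) μ)
    (hQrange : ∀ s, s < T → ∀ ω, Q s ω ∈ Set.Icc (0 : ℝ) 1)
    (p : ℕ → ℝ) (hpnonneg : ∀ s, s < T → 0 ≤ p s)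
    (σ : Equiv.Perm ℕ) (hσfix : ∀ s, T ≤ s → σ s = s)
    (hsorted : ∀ s s' : ℕ, s ≤ s' → s' < T → p (σ s') ≤ p (σ s)) :
    ∫ ω, singleItemRev b T p (fun s => Q s ω) ∂μ
      ≤ ∫ ω, singleItemRev b T (fun s => p (σ s)) (fun s => Q (σ s) ω) ∂μ := by
  classical
  have hσlt : ∀ s, s < T → σ s < T := by
    intro s hs
    by_contra h
    push_neg at h
    have := σ.injective (hσfix (σ s) h)
    omega
  -- measurability of revenue functionals
  have hmeasRev : ∀ (P : ℕ → ℝ) (R : ℕ → Ω → ℝ), (∀ s, s < T → Measurable (R s)) →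
      Measurable (fun ω => singleItemRev b T P (fun s => R s ω)) := by
    intro P R hR
    unfold singleItemRev
    apply Finset.measurable_sum
    intro t ht
    have hsum : ∀ n, n ≤ T → Measurable (fun ω => ∑ s ∈ Finset.range n, R s ω) := by
      intro n hn
      apply Finset.measurable_sum
      intro s hs
      exact hR s (lt_of_lt_of_le (Finset.mem_range.mp hs) hn)
    have ht' : t < T := Finset.mem_range.mp ht
    exact measurable_const.mul
      ((measurable_const.min (hsum (t+1) ht')).sub
        (measurable_const.min (hsum t (le_of_lt ht'))))
  -- boundedness of the revenue
  have habs : ∀ (P : ℕ → ℝ), (∀ s, s < T → 0 ≤ P s) →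
      ∀ (r : ℕ → ℝ), (∀ s, s < T → r s ∈ Set.Icc (0:ℝ) 1) →
      |singleItemRev b T P r| ≤ ∑ t ∈ Finset.range T, P t := by
    intro P hP r hr
    have hrev : singleItemRev b T P r = ∑ t ∈ Finset.range T, P t * Stmt11Aux.Dlt b r t := rfl
    rw [abs_le, hrev]
    constructor
    · have : (0:ℝ) ≤ ∑ t ∈ Finset.range T, P t * Stmt11Aux.Dlt b r t := by
        refine Finset.sum_nonneg ?_
        intro t ht
        have ht' := Finset.mem_range.mp ht
        exact mul_nonneg (hP t ht') (Stmt11Aux.Dlt_nonneg b r t (hr t ht').1)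
      have h2 : (0:ℝ) ≤ ∑ t ∈ Finset.range T, P t := Finset.sum_nonneg (fun t ht => hP t (Finset.mem_range.mp ht))
      linarith
    · refine Finset.sum_le_sum ?_
      intro t ht
      have ht' := Finset.mem_range.mp ht
      calc P t * Stmt11Aux.Dlt b r t ≤ P t * r t := by
            exact mul_le_mul_of_nonneg_left (Stmt11Aux.Dlt_le b r t (hr t ht').1) (hP t ht')
        _ ≤ P t * 1 := mul_le_mul_of_nonneg_left (hr t ht').2 (hP t ht')
        _ ≤ ∑ _ ∈ Finset.range 1, P t := by simp
        _ = P t := by simp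
  -- integrability of both sides
  have hint : ∀ (P : ℕ → ℝ), (∀ s, s < T → 0 ≤ P s) → ∀ (R : ℕ → Ω → ℝ),
      (∀ s, s < T → Measurable (R s)) → (∀ s, s < T → ∀ ω, R s ω ∈ Set.Icc (0:ℝ) 1) →
      Integrable (fun ω => singleItemRev b T P (fun s => R s ω)) μ := by
    intro P hP R hR hRrange
    refine (integrable_const (∑ t ∈ Finset.range T, P t)).mono'
      ((hmeasRev P R hR).aestronglyMeasurable) ?_
    filter_upwards with ω
    simpa using habs P hP (fun s => R s ω) (fun s hs => hRrange s hs ω)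
  have hint1 := hint p hpnonneg Q hQmeas hQrange
  have hint2 := hint (fun s => p (σ s)) (fun s hs => hpnonneg (σ s) (hσlt s hs))
    (fun s => Q (σ s)) (fun s hs => hQmeas (σ s) (hσlt s hs))
    (fun s hs => hQrange (σ s) (hσlt s hs))
  refine integral_mono hint1 hint2 ?_
  intro ω
  exact Stmt11Aux.sorted_rev_ge b hb T (fun s => Q s ω) (fun s hs => (hQrange s hs ω).1)
    p hpnonneg σ hσfix hsorted
end

section
/- Fix a real b ≥ 0, prices p_H ≥ p_L ≥ 0, a positive integer T, an index t ∈ {1, …, T−1}, and probabilities v_1, …, v_T ∈ [0,1] with v_t < v_{t+1}. Let v' be obtained from v by exchanging v_t and v_{t+1}. Then the expected revenue of the randomized two-price calendar with probabilities v' is at least the expected revenue of the randomized two-price calendar with probabilities v. -/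
open MeasureTheory ProbabilityTheory

/-- Realized revenue of a randomized two-price calendar: the period-`t` price is
`A t · pH + (1 − A t) · pL` and the period-`t` demand is `A t · QH t + (1 − A t) · QL t`,
where `A t ∈ {0,1}` is the indicator that the high price is offered in period `t`. -/
noncomputable def twoPriceRev (b pH pL : ℝ) (T : ℕ) (A QH QL : ℕ → ℝ) : ℝ :=
  singleItemRev b T (fun t => A t * pH + (1 - A t) * pL)
    (fun t => A t * QH t + (1 - A t) * QL t)

/-- A randomized two-price calendar over `T` periods: `(A_t)_{t<T}`, `(QH_t)_{t<T}`,
`(QL_t)_{t<T}` are jointly independent, `A t` is Bernoulli with success probability `v t`,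
`QH t ∼ FH` and `QL t ∼ FL`. -/
def IsTwoPriceCalendar {Ω : Type*} [MeasurableSpace Ω] (μ : Measure Ω)
    (T : ℕ) (FH FL : Measure ℝ) (v : ℕ → ℝ) (A QH QL : ℕ → Ω → ℝ) : Prop :=
  iIndepFun (m := fun _ : Fin T × Fin 3 => inferInstance)
      (fun i : Fin T × Fin 3 =>
        if i.2 = 0 then A i.1 else if i.2 = 1 then QH i.1 else QL i.1) μ ∧
    (∀ t, t < T → Measurable (A t) ∧ Measurable (QH t) ∧ Measurable (QL t)) ∧
    (∀ t, t < T → (∀ ω, A t ω = 0 ∨ A t ω = 1) ∧ μ {ω | A t ω = 1} = ENNReal.ofReal (v t)) ∧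
    (∀ t, t < T → μ.map (QH t) = FH ∧ μ.map (QL t) = FL)

/-! ### Auxiliary deterministic lemmas -/

lemma min_superadd {b S x y : ℝ} (hx : 0 ≤ x) (hy : 0 ≤ y) :
    min b S + min b (S + x + y) ≤ min b (S + x) + min b (S + y) := by
  rcases le_total b (S + x) with h1 | h1
  · have e1 : min b (S + x) = b := min_eq_left h1
    have e2 : min b (S + x + y) = b := min_eq_left (by linarith)
    have e3 : min b S ≤ min b (S + y) := min_le_min le_rfl (by linarith)
    linarith
  · rcases le_total b (S + y) with h2 | h2
    · have e1 : min b (S + y) = b := min_eq_left h2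
      have e2 : min b (S + x + y) = b := min_eq_left (by linarith)
      have e3 : min b S ≤ min b (S + x) := min_le_min le_rfl (by linarith)
      linarith
    · have e1 : min b (S + x) = S + x := min_eq_right h1
      have e2 : min b (S + y) = S + y := min_eq_right h2
      have e3 : min b S ≤ S := min_le_right _ _
      have e4 : min b (S + x + y) ≤ S + x + y := min_le_right _ _
      linarith

lemma min_lipschitz {b S d : ℝ} (hd : 0 ≤ d) :
    min b S ≤ min b (S + d) ∧ min b (S + d) ≤ min b S + d := by
  constructor
  · exact min_le_min le_rfl (by linarith)
  · rcases le_total b S with h | h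
    · rw [min_eq_left h, min_eq_left (by linarith)]; linarith
    · rw [min_eq_right h]; linarith [min_le_right b (S + d)]

lemma singleItemRev_congr (b : ℝ) (T : ℕ) {P Q P' Q' : ℕ → ℝ}
    (hP : ∀ s, s < T → P s = P' s) (hQ : ∀ s, s < T → Q s = Q' s) :
    singleItemRev b T P Q = singleItemRev b T P' Q' := by
  unfold singleItemRev
  have h1 : ∀ k, k ≤ T → ∑ i ∈ Finset.range k, Q i = ∑ i ∈ Finset.range k, Q' i :=
    fun k hk => Finset.sum_congr rfl fun i hi =>
      hQ i (lt_of_lt_of_le (Finset.mem_range.mp hi) hk)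
  refine Finset.sum_congr rfl fun s hs => ?_
  have hs' := Finset.mem_range.mp hs
  rw [hP s hs', h1 (s + 1) hs', h1 s hs'.le]

lemma abs_singleItemRev_le {b C : ℝ} (T : ℕ) {P Q : ℕ → ℝ}
    (hP : ∀ s, s < T → P s ∈ Set.Icc 0 C) (hQ : ∀ s, s < T → Q s ∈ Set.Icc (0:ℝ) 1) :
    |singleItemRev b T P Q| ≤ T * C := by
  rcases Nat.eq_zero_or_pos T with rfl | hT
  · simp [singleItemRev]
  have hC : 0 ≤ C := le_trans (hP 0 hT).1 (hP 0 hT).2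
  unfold singleItemRev
  calc |∑ s ∈ Finset.range T, P s * (min b (∑ i ∈ Finset.range (s + 1), Q i)
        - min b (∑ i ∈ Finset.range s, Q i))|
      ≤ ∑ s ∈ Finset.range T, |P s * (min b (∑ i ∈ Finset.range (s + 1), Q i)
        - min b (∑ i ∈ Finset.range s, Q i))| := Finset.abs_sum_le_sum_abs _ _
    _ ≤ ∑ s ∈ Finset.range T, C := by
        refine Finset.sum_le_sum fun s hs => ?_
        have hs' := Finset.mem_range.mp hs
        have hQs := hQ s hs'
        have hsum : ∑ i ∈ Finset.range (s + 1), Q i = (∑ i ∈ Finset.range s, Q i) + Q s :=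
          Finset.sum_range_succ Q s
        have hl := min_lipschitz (b := b) (S := ∑ i ∈ Finset.range s, Q i) hQs.1
        rw [abs_mul]
        have h1 : |P s| ≤ C := by
          rw [abs_of_nonneg (hP s hs').1]; exact (hP s hs').2
        have h2 : |min b (∑ i ∈ Finset.range (s + 1), Q i)
            - min b (∑ i ∈ Finset.range s, Q i)| ≤ 1 := by
          rw [hsum, abs_of_nonneg (by linarith [hl.1])]
          linarith [hl.2, hQs.2]
        calc |P s| * |min b (∑ i ∈ Finset.range (s + 1), Q i)
              - min b (∑ i ∈ Finset.range s, Q i)| ≤ C * 1 :=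
            mul_le_mul h1 h2 (abs_nonneg _) hC
          _ = C := mul_one C
    _ = T * C := by rw [Finset.sum_const, Finset.card_range, nsmul_eq_mul]

lemma exchange_det (b : ℝ) (T t : ℕ) (ht : t + 1 < T) (P Q : ℕ → ℝ)
    (hQ : ∀ s, 0 ≤ Q s) (hP : P (t + 1) ≤ P t) :
    singleItemRev b T (fun s => P (Equiv.swap t (t + 1) s))
      (fun s => Q (Equiv.swap t (t + 1) s)) ≤ singleItemRev b T P Q := by
  set σ := Equiv.swap t (t + 1) with hσdef
  have hσ_sum : ∀ k, k ≠ t + 1 →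
      ∑ s ∈ Finset.range k, Q (σ s) = ∑ s ∈ Finset.range k, Q s := by
    intro k hk
    rcases le_or_gt k (t + 1) with h | h
    · refine Finset.sum_congr rfl fun s hs => ?_
      have hs' := Finset.mem_range.mp hs
      have : s < t + 1 := by omega
      rw [hσdef, Equiv.swap_apply_of_ne_of_ne (by omega) (by omega)]
    · refine Finset.sum_equiv σ (fun i => ?_) (fun i _ => rfl)
      simp only [Finset.mem_range]
      rcases eq_or_ne i t with rfl | h1
      · simp only [hσdef, Equiv.swap_apply_left]; omega
      rcases eq_or_ne i (t + 1) with rfl | h2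
      · simp only [hσdef, Equiv.swap_apply_right]; omega
      · rw [hσdef, Equiv.swap_apply_of_ne_of_ne h1 h2]
  set d : ℕ → ℝ := fun s =>
    P s * (min b (∑ i ∈ Finset.range (s + 1), Q i) - min b (∑ i ∈ Finset.range s, Q i))
    - P (σ s) * (min b (∑ i ∈ Finset.range (s + 1), Q (σ i))
        - min b (∑ i ∈ Finset.range s, Q (σ i))) with hd
  rw [← sub_nonneg]
  have hsub : singleItemRev b T P Q
      - singleItemRev b T (fun s => P (σ s)) (fun s => Q (σ s))
      = ∑ s ∈ Finset.range T, d s := by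
    unfold singleItemRev
    rw [← Finset.sum_sub_distrib]
  rw [hsub]
  have hss : ({t, t + 1} : Finset ℕ) ⊆ Finset.range T := by
    intro x hx
    simp only [Finset.mem_insert, Finset.mem_singleton] at hx
    rcases hx with rfl | rfl <;> simp only [Finset.mem_range] <;> omega
  have hvan : ∀ x ∈ Finset.range T, x ∉ ({t, t + 1} : Finset ℕ) → d x = 0 := by
    intro x _ hx
    simp only [Finset.mem_insert, Finset.mem_singleton, not_or] at hx
    have hσx : σ x = x := Equiv.swap_apply_of_ne_of_ne hx.1 hx.2
    rw [hd]
    simp only [hσx, hσ_sum x (by omega), hσ_sum (x + 1) (by omega), sub_self]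
  rw [← Finset.sum_subset hss hvan, Finset.sum_pair (by omega : t ≠ t + 1)]
  have hst : ∑ i ∈ Finset.range t, Q (σ i) = ∑ i ∈ Finset.range t, Q i := hσ_sum t (by omega)
  have hs2 : ∑ i ∈ Finset.range (t + 2), Q (σ i) = ∑ i ∈ Finset.range (t + 2), Q i :=
    hσ_sum (t + 2) (by omega)
  set St := ∑ i ∈ Finset.range t, Q i with hSt
  have hS1 : ∑ i ∈ Finset.range (t + 1), Q i = St + Q t := Finset.sum_range_succ Q t
  have hS1' : ∑ i ∈ Finset.range (t + 1), Q (σ i) = St + Q (t + 1) := by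
    rw [Finset.sum_range_succ, hst, hσdef, Equiv.swap_apply_left]
  have hS2 : ∑ i ∈ Finset.range (t + 2), Q i = St + Q t + Q (t + 1) := by
    rw [Finset.sum_range_succ, hS1]
  have hσt : σ t = t + 1 := Equiv.swap_apply_left _ _
  have hσt1 : σ (t + 1) = t := Equiv.swap_apply_right _ _
  rw [hd]
  simp only [hσt, hσt1, hS1, hS1', hS2, hs2, hst, ← hSt]
  have key := min_superadd (b := b) (S := St) (hQ t) (hQ (t + 1))
  nlinarith [mul_nonneg (sub_nonneg.2 hP)
      (sub_nonneg.2 (by linarith : min b St + min b (St + Q t + Q (t + 1))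
        ≤ min b (St + Q t) + min b (St + Q (t + 1))))]

/-! ### Bernoulli laws and product decompositions -/

noncomputable def bern (p : ℝ) : Measure ℝ :=
  ENNReal.ofReal (1 - p) • Measure.dirac 0 + ENNReal.ofReal p • Measure.dirac 1

lemma bern_apply (p : ℝ) (s : Set ℝ) :
    bern p s = ENNReal.ofReal (1 - p) * Measure.dirac 0 s
      + ENNReal.ofReal p * Measure.dirac 1 s := by
  simp [bern]

lemma bern_prob {p : ℝ} (hp : p ∈ Set.Icc (0:ℝ) 1) : IsProbabilityMeasure (bern p) := by
  constructor
  rw [bern_apply p Set.univ]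
  simp only [measure_univ, mul_one]
  rw [← ENNReal.ofReal_add (by linarith [hp.2]) hp.1]
  norm_num

lemma bern_compl_Icc (p : ℝ) : bern p (Set.Icc (0:ℝ) 1)ᶜ = 0 := by
  rw [bern_apply]
  rw [Measure.dirac_apply' _ measurableSet_Icc.compl,
    Measure.dirac_apply' _ measurableSet_Icc.compl]
  rw [Set.indicator_of_notMem (by simp), Set.indicator_of_notMem (by simp)]
  simp

lemma map_bernoulli {Ω : Type*} [MeasurableSpace Ω] (μ : Measure Ω) [IsProbabilityMeasure μ]
    (X : Ω → ℝ) (hX : Measurable X) (h01 : ∀ ω, X ω = 0 ∨ X ω = 1)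
    {p : ℝ} (hp : p ∈ Set.Icc (0:ℝ) 1) (hp1 : μ {ω | X ω = 1} = ENNReal.ofReal p) :
    μ.map X = bern p := by
  have hE1 : MeasurableSet {ω | X ω = 1} := hX (measurableSet_singleton 1)
  have hE0 : {ω | X ω = 0} = {ω | X ω = 1}ᶜ := by
    ext ω; rcases h01 ω with h | h <;> simp [h]
  have hμ0 : μ {ω | X ω = 0} = 1 - ENNReal.ofReal p := by
    rw [hE0, measure_compl hE1 (measure_ne_top _ _), measure_univ, hp1]
  ext s hs
  rw [Measure.map_apply hX hs, bern_apply,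
    Measure.dirac_apply' _ hs, Measure.dirac_apply' _ hs]
  by_cases h0 : (0:ℝ) ∈ s <;> by_cases h1 : (1:ℝ) ∈ s
  · have : X ⁻¹' s = Set.univ := by
      ext ω; rcases h01 ω with h | h <;> simp [h, h0, h1]
    rw [this]
    simp only [Set.indicator_of_mem h0, Set.indicator_of_mem h1, Pi.one_apply, mul_one,
      measure_univ]
    rw [← ENNReal.ofReal_add (by linarith [hp.2]) hp.1]; norm_num
  · have : X ⁻¹' s = {ω | X ω = 0} := by
      ext ω; rcases h01 ω with h | h <;> simp [h, h0, h1]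
    rw [this, hμ0]
    simp only [Set.indicator_of_mem h0, Set.indicator_of_notMem h1, Pi.one_apply, mul_one,
      mul_zero, add_zero]
    rw [ENNReal.ofReal_sub _ hp.1]; simp
  · have : X ⁻¹' s = {ω | X ω = 1} := by
      ext ω; rcases h01 ω with h | h <;> simp [h, h0, h1]
    rw [this, hp1]
    simp [Set.indicator_of_notMem h0, Set.indicator_of_mem h1]
  · have : X ⁻¹' s = ∅ := by
      ext ω; rcases h01 ω with h | h <;> simp [h, h0, h1]
    rw [this]
    simp [Set.indicator_of_notMem h0, Set.indicator_of_notMem h1]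

lemma map_eq_pi {Ω ι : Type*} [MeasurableSpace Ω] [Fintype ι] (μ : Measure Ω)
    [IsProbabilityMeasure μ] {X : ι → Ω → ℝ} (hX : ∀ i, Measurable (X i))
    (h : iIndepFun (m := fun _ => inferInstance) X μ) :
    μ.map (fun ω i => X i ω) = Measure.pi (fun i => μ.map (X i)) := by
  haveI : ∀ i, IsProbabilityMeasure (μ.map (X i)) :=
    fun i => Measure.isProbabilityMeasure_map (hX i).aemeasurable
  refine (Measure.pi_eq fun s hs => ?_).symm
  rw [Measure.map_apply (measurable_pi_lambda _ hX) (MeasurableSet.univ_pi hs)]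
  have hpre : (fun ω i => X i ω) ⁻¹' Set.pi Set.univ s
      = ⋂ i ∈ (Finset.univ : Finset ι), X i ⁻¹' s i := by
    ext ω; simp [Set.mem_pi]
  rw [hpre, h.measure_inter_preimage_eq_mul Finset.univ (fun i _ => hs i)]
  exact Finset.prod_congr rfl fun i _ => (Measure.map_apply (hX i) (hs i)).symm

noncomputable def upd2 {ι : Type*} [DecidableEq ι] (m : ι → Measure ℝ) (i₀ i₁ : ι) (a b : ℝ) :
    ι → Measure ℝ :=
  Function.update (Function.update m i₀ (Measure.dirac a)) i₁ (Measure.dirac b)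

lemma upd2_prob {ι : Type*} [DecidableEq ι] (m : ι → Measure ℝ)
    [hm : ∀ i, IsProbabilityMeasure (m i)] (i₀ i₁ : ι) (a b : ℝ) (i : ι) :
    IsProbabilityMeasure (upd2 m i₀ i₁ a b i) := by
  unfold upd2
  rcases eq_or_ne i i₁ with rfl | h1
  · rw [Function.update_self]; infer_instance
  rw [Function.update_of_ne h1]
  rcases eq_or_ne i i₀ with rfl | h0
  · rw [Function.update_self]; infer_instance
  · rw [Function.update_of_ne h0]; infer_instance

lemma upd2_at0 {ι : Type*} [DecidableEq ι] (m : ι → Measure ℝ) {i₀ i₁ : ι} (hne : i₀ ≠ i₁)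
    (a b : ℝ) : upd2 m i₀ i₁ a b i₀ = Measure.dirac a := by
  unfold upd2; rw [Function.update_of_ne hne, Function.update_self]

lemma upd2_at1 {ι : Type*} [DecidableEq ι] (m : ι → Measure ℝ) (i₀ i₁ : ι)
    (a b : ℝ) : upd2 m i₀ i₁ a b i₁ = Measure.dirac b := by
  unfold upd2; rw [Function.update_self]

lemma upd2_other {ι : Type*} [DecidableEq ι] (m : ι → Measure ℝ) {i₀ i₁ i : ι}
    (h0 : i ≠ i₀) (h1 : i ≠ i₁) (a b : ℝ) : upd2 m i₀ i₁ a b i = m i := by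
  unfold upd2; rw [Function.update_of_ne h1, Function.update_of_ne h0]

lemma pi_bern_decomp {ι : Type*} [Fintype ι] [DecidableEq ι]
    (m : ι → Measure ℝ) [hm : ∀ i, IsProbabilityMeasure (m i)]
    (i₀ i₁ : ι) (hne : i₀ ≠ i₁) (p q : ℝ)
    (h₀ : m i₀ = bern p) (h₁ : m i₁ = bern q) :
    Measure.pi m
      = (ENNReal.ofReal (1 - p) * ENNReal.ofReal (1 - q)) • Measure.pi (upd2 m i₀ i₁ 0 0)
      + (ENNReal.ofReal (1 - p) * ENNReal.ofReal q) • Measure.pi (upd2 m i₀ i₁ 0 1)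
      + (ENNReal.ofReal p * ENNReal.ofReal (1 - q)) • Measure.pi (upd2 m i₀ i₁ 1 0)
      + (ENNReal.ofReal p * ENNReal.ofReal q) • Measure.pi (upd2 m i₀ i₁ 1 1) := by
  haveI : ∀ a b : ℝ, ∀ i, SigmaFinite (upd2 m i₀ i₁ a b i) := by
    intro a b i
    haveI := upd2_prob m i₀ i₁ a b i
    infer_instance
  refine Measure.pi_eq fun s hs => ?_
  simp only [Measure.coe_add, Measure.coe_smul, Pi.add_apply, Pi.smul_apply, smul_eq_mul,
    Measure.pi_pi]
  have key : ∀ (ν : ι → Measure ℝ), (∀ i, i ≠ i₀ → i ≠ i₁ → ν i = m i) →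
      ∏ i, ν i (s i) = ν i₀ (s i₀) * (ν i₁ (s i₁)
        * ∏ i ∈ (Finset.univ.erase i₀).erase i₁, m i (s i)) := by
    intro ν hν
    rw [← Finset.mul_prod_erase Finset.univ (fun i => ν i (s i)) (Finset.mem_univ i₀),
      ← Finset.mul_prod_erase (Finset.univ.erase i₀) (fun i => ν i (s i))
        (Finset.mem_erase.2 ⟨hne.symm, Finset.mem_univ i₁⟩)]
    congr 2
    refine Finset.prod_congr rfl fun i hi => ?_
    have h1 : i ≠ i₁ := (Finset.mem_erase.1 hi).1
    have h0 : i ≠ i₀ := (Finset.mem_erase.1 ((Finset.mem_erase.1 hi).2)).1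
    rw [hν i h0 h1]
  rw [key m (fun _ _ _ => rfl),
    key _ (fun i a b' => upd2_other m a b' 0 0),
    key _ (fun i a b' => upd2_other m a b' 0 1),
    key _ (fun i a b' => upd2_other m a b' 1 0),
    key _ (fun i a b' => upd2_other m a b' 1 1),
    upd2_at0 m hne, upd2_at0 m hne, upd2_at0 m hne, upd2_at0 m hne,
    upd2_at1 m, upd2_at1 m, upd2_at1 m, upd2_at1 m, h₀, h₁,
    bern_apply p (s i₀), bern_apply q (s i₁)]
  ring

lemma ae_pi_mem {ι : Type*} [Fintype ι] (m : ι → Measure ℝ) [∀ i, SigmaFinite (m i)]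
    (S : ι → Set ℝ) (hS : ∀ i, m i (S i)ᶜ = 0) :
    ∀ᵐ x ∂Measure.pi m, ∀ i, x i ∈ S i := by
  rw [ae_all_iff]
  intro i
  have h := Measure.pi_eval_preimage_null (μ := m) (i := i) (hS i)
  rw [ae_iff]
  exact h

lemma ae_pi_eq {ι : Type*} [Fintype ι] (m : ι → Measure ℝ) [∀ i, SigmaFinite (m i)]
    {i : ι} {c : ℝ} (hc : m i = Measure.dirac c) :
    ∀ᵐ x ∂Measure.pi m, x i = c := by
  have h : m i ({c}ᶜ) = 0 := by
    rw [hc, Measure.dirac_apply' _ (measurableSet_singleton c).compl,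
      Set.indicator_of_notMem (by simp)]
  have h2 := Measure.pi_eval_preimage_null (μ := m) (i := i) h
  rw [ae_iff]
  exact h2

/-! ### The canonical revenue function on the product space -/

noncomputable def coordFn (T : ℕ) (j : Fin 3) (x : Fin T × Fin 3 → ℝ) (s : ℕ) : ℝ :=
  if h : s < T then x (⟨s, h⟩, j) else 0

noncomputable def gRev (b pH pL : ℝ) (T : ℕ) (x : Fin T × Fin 3 → ℝ) : ℝ :=
  twoPriceRev b pH pL T (coordFn T 0 x) (coordFn T 1 x) (coordFn T 2 x)

lemma measurable_coordFn (T : ℕ) (j : Fin 3) (s : ℕ) :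
    Measurable (fun x : Fin T × Fin 3 → ℝ => coordFn T j x s) := by
  unfold coordFn
  by_cases h : s < T
  · simp only [dif_pos h]; exact measurable_pi_apply _
  · simp only [dif_neg h]; exact measurable_const

lemma measurable_gRev (b pH pL : ℝ) (T : ℕ) : Measurable (gRev b pH pL T) := by
  unfold gRev twoPriceRev singleItemRev
  apply Finset.measurable_sum
  intro s _
  have hdem : ∀ k, Measurable (fun x : Fin T × Fin 3 → ℝ =>
      coordFn T 0 x k * coordFn T 1 x k + (1 - coordFn T 0 x k) * coordFn T 2 x k) :=
    fun k => ((measurable_coordFn T 0 k).mul (measurable_coordFn T 1 k)).add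
      ((measurable_const.sub (measurable_coordFn T 0 k)).mul (measurable_coordFn T 2 k))
  apply Measurable.mul
  · exact ((measurable_coordFn T 0 s).mul measurable_const).add
      ((measurable_const.sub (measurable_coordFn T 0 s)).mul measurable_const)
  · exact (measurable_const.min (Finset.measurable_sum _ fun i _ => hdem i)).sub
      (measurable_const.min (Finset.measurable_sum _ fun i _ => hdem i))

lemma abs_gRev_le {b pH pL : ℝ} (hpL : 0 ≤ pL) (hpHL : pL ≤ pH) (T : ℕ)
    {x : Fin T × Fin 3 → ℝ} (hx : ∀ i, x i ∈ Set.Icc (0:ℝ) 1) :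
    |gRev b pH pL T x| ≤ T * pH := by
  unfold gRev twoPriceRev
  apply abs_singleItemRev_le
  · intro s hs
    have ha := hx (⟨s, hs⟩, 0)
    unfold coordFn
    simp only [dif_pos hs]
    constructor
    · nlinarith [ha.1, ha.2]
    · nlinarith [ha.1, ha.2]
  · intro s hs
    have ha := hx (⟨s, hs⟩, 0)
    have hh := hx (⟨s, hs⟩, 1)
    have hl := hx (⟨s, hs⟩, 2)
    unfold coordFn
    simp only [dif_pos hs]
    constructor
    · nlinarith [ha.1, ha.2, hh.1, hh.2, hl.1, hl.2]
    · nlinarith [ha.1, ha.2, hh.1, hh.2, hl.1, hl.2]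

lemma integrable_gRev {b pH pL : ℝ} (hpL : 0 ≤ pL) (hpHL : pL ≤ pH) (T : ℕ)
    (m : Fin T × Fin 3 → Measure ℝ) [∀ i, IsProbabilityMeasure (m i)]
    (hm : ∀ i, m i (Set.Icc (0:ℝ) 1)ᶜ = 0) :
    Integrable (gRev b pH pL T) (Measure.pi m) := by
  refine Integrable.mono' (integrable_const ((T : ℝ) * pH))
    (measurable_gRev b pH pL T).aestronglyMeasurable ?_
  filter_upwards [ae_pi_mem m (fun _ => Set.Icc 0 1) hm] with x hx
  rw [Real.norm_eq_abs]
  exact abs_gRev_le hpL hpHL T hx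

lemma integral_four_smul {α : Type*} [MeasurableSpace α] (f : α → ℝ)
    (c₁ c₂ c₃ c₄ : ENNReal) (h₁ : c₁ ≠ ⊤) (h₂ : c₂ ≠ ⊤) (h₃ : c₃ ≠ ⊤) (h₄ : c₄ ≠ ⊤)
    (ν₁ ν₂ ν₃ ν₄ : Measure α)
    (hf₁ : Integrable f ν₁) (hf₂ : Integrable f ν₂) (hf₃ : Integrable f ν₃)
    (hf₄ : Integrable f ν₄) :
    ∫ x, f x ∂(c₁ • ν₁ + c₂ • ν₂ + c₃ • ν₃ + c₄ • ν₄)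
      = c₁.toReal * ∫ x, f x ∂ν₁ + c₂.toReal * ∫ x, f x ∂ν₂
        + c₃.toReal * ∫ x, f x ∂ν₃ + c₄.toReal * ∫ x, f x ∂ν₄ := by
  have g₁ := hf₁.smul_measure h₁
  have g₂ := hf₂.smul_measure h₂
  have g₃ := hf₃.smul_measure h₃
  have g₄ := hf₄.smul_measure h₄
  rw [integral_add_measure ((g₁.add_measure g₂).add_measure g₃) g₄,
    integral_add_measure (g₁.add_measure g₂) g₃, integral_add_measure g₁ g₂,
    integral_smul_measure, integral_smul_measure, integral_smul_measure, integral_smul_measure]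
  simp [smul_eq_mul]

/-- in a randomized two-price calendar, if `v_t < v_{t+1}` for two consecutive
periods, then exchanging the probabilities `v_t` and `v_{t+1}` does not decrease the expected
revenue.  Periods are indexed `0, …, T-1`, with exchanged positions `t` and `t+1`, `t+1 < T`. -/
theorem stmt_12 {Ω₁ Ω₂ : Type*} [MeasurableSpace Ω₁] [MeasurableSpace Ω₂]
    (μ₁ : Measure Ω₁) (μ₂ : Measure Ω₂) [IsProbabilityMeasure μ₁] [IsProbabilityMeasure μ₂]
    (b : ℝ) (hb : 0 ≤ b) (pH pL : ℝ) (hpL : 0 ≤ pL) (hpHL : pL ≤ pH)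
    (T : ℕ) (hT : 0 < T) (t : ℕ) (ht : t + 1 < T)
    (FH FL : Measure ℝ) [IsProbabilityMeasure FH] [IsProbabilityMeasure FL]
    (hFH : FH (Set.Icc (0 : ℝ) 1)ᶜ = 0) (hFL : FL (Set.Icc (0 : ℝ) 1)ᶜ = 0)
    (v : ℕ → ℝ) (hv : ∀ s, s < T → v s ∈ Set.Icc (0 : ℝ) 1) (hvt : v t < v (t + 1))
    (A QH QL : ℕ → Ω₁ → ℝ) (A' QH' QL' : ℕ → Ω₂ → ℝ)
    (h₁ : IsTwoPriceCalendar μ₁ T FH FL v A QH QL)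
    (h₂ : IsTwoPriceCalendar μ₂ T FH FL (fun s => v (Equiv.swap t (t + 1) s)) A' QH' QL') :
    ∫ ω, twoPriceRev b pH pL T (fun s => A s ω) (fun s => QH s ω) (fun s => QL s ω) ∂μ₁
      ≤ ∫ ω, twoPriceRev b pH pL T (fun s => A' s ω) (fun s => QH' s ω)
          (fun s => QL' s ω) ∂μ₂ := by
  obtain ⟨hind₁, hmeas₁, hA₁, hQ₁⟩ := h₁
  obtain ⟨hind₂, hmeas₂, hA₂, hQ₂⟩ := h₂
  set σ : Equiv.Perm ℕ := Equiv.swap t (t + 1) with hσdef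
  have htT : t < T := by omega
  -- canonical factor measures
  set m₁ : Fin T × Fin 3 → Measure ℝ := fun i =>
    if i.2 = 0 then bern (v i.1) else if i.2 = 1 then FH else FL with hm₁
  set m₂ : Fin T × Fin 3 → Measure ℝ := fun i =>
    if i.2 = 0 then bern (v (σ i.1)) else if i.2 = 1 then FH else FL with hm₂
  have hvσ : ∀ s : ℕ, s < T → v (σ s) ∈ Set.Icc (0:ℝ) 1 := by
    intro s hs
    rcases eq_or_ne s t with rfl | h1
    · rw [hσdef]; simp only [Equiv.swap_apply_left]; exact hv _ ht
    rcases eq_or_ne s (t + 1) with rfl | h2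
    · rw [hσdef]; simp only [Equiv.swap_apply_right]; exact hv _ htT
    · rw [hσdef, Equiv.swap_apply_of_ne_of_ne h1 h2]; exact hv _ hs
  haveI hm₁p : ∀ i, IsProbabilityMeasure (m₁ i) := by
    rintro ⟨a, j⟩
    have ha := hv a a.isLt
    fin_cases j
    · simp only [hm₁]; exact bern_prob ha
    · simp only [hm₁]; exact (inferInstance : IsProbabilityMeasure FH)
    · simp only [hm₁]; exact (inferInstance : IsProbabilityMeasure FL)
  haveI hm₂p : ∀ i, IsProbabilityMeasure (m₂ i) := by
    rintro ⟨a, j⟩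
    have ha := hvσ a a.isLt
    fin_cases j
    · simp only [hm₂]; exact bern_prob ha
    · simp only [hm₂]; exact (inferInstance : IsProbabilityMeasure FH)
    · simp only [hm₂]; exact (inferInstance : IsProbabilityMeasure FL)
  -- measurability of the tuples
  have hXmeas₁ : ∀ i : Fin T × Fin 3, Measurable
      ((fun i : Fin T × Fin 3 =>
        if i.2 = 0 then A i.1 else if i.2 = 1 then QH i.1 else QL i.1) i) := by
    rintro ⟨a, j⟩
    obtain ⟨ha, hh, hl⟩ := hmeas₁ a a.isLt
    fin_cases j <;> simpa
  have hXmeas₂ : ∀ i : Fin T × Fin 3, Measurable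
      ((fun i : Fin T × Fin 3 =>
        if i.2 = 0 then A' i.1 else if i.2 = 1 then QH' i.1 else QL' i.1) i) := by
    rintro ⟨a, j⟩
    obtain ⟨ha, hh, hl⟩ := hmeas₂ a a.isLt
    fin_cases j <;> simpa
  -- identification of the joint laws
  have hmap₁ : μ₁.map (fun ω (i : Fin T × Fin 3) =>
      (if i.2 = 0 then A i.1 else if i.2 = 1 then QH i.1 else QL i.1) ω)
      = Measure.pi m₁ := by
    rw [map_eq_pi μ₁ hXmeas₁ hind₁]
    refine congrArg Measure.pi (funext fun i => ?_)
    rcases i with ⟨a, j⟩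
    fin_cases j
    · show μ₁.map (A a) = m₁ (a, 0)
      simp only [hm₁]
      exact map_bernoulli μ₁ (A a) (hmeas₁ a a.isLt).1 (hA₁ a a.isLt).1 (hv a a.isLt)
        (hA₁ a a.isLt).2
    · show μ₁.map (QH a) = m₁ (a, 1)
      simp only [hm₁]
      exact (hQ₁ a a.isLt).1
    · show μ₁.map (QL a) = m₁ (a, 2)
      simp only [hm₁]
      exact (hQ₁ a a.isLt).2
  have hmap₂ : μ₂.map (fun ω (i : Fin T × Fin 3) =>
      (if i.2 = 0 then A' i.1 else if i.2 = 1 then QH' i.1 else QL' i.1) ω)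
      = Measure.pi m₂ := by
    rw [map_eq_pi μ₂ hXmeas₂ hind₂]
    refine congrArg Measure.pi (funext fun i => ?_)
    rcases i with ⟨a, j⟩
    fin_cases j
    · show μ₂.map (A' a) = m₂ (a, 0)
      simp only [hm₂]
      exact map_bernoulli μ₂ (A' a) (hmeas₂ a a.isLt).1 (hA₂ a a.isLt).1 (hvσ a a.isLt)
        (hA₂ a a.isLt).2
    · show μ₂.map (QH' a) = m₂ (a, 1)
      simp only [hm₂]
      exact (hQ₂ a a.isLt).1
    · show μ₂.map (QL' a) = m₂ (a, 2)
      simp only [hm₂]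
      exact (hQ₂ a a.isLt).2
  set g := gRev b pH pL T with hgdef
  have hg : Measurable g := measurable_gRev b pH pL T
  -- transfer the two integrals to the canonical space
  have hIL : ∫ ω, twoPriceRev b pH pL T (fun s => A s ω) (fun s => QH s ω)
        (fun s => QL s ω) ∂μ₁ = ∫ x, g x ∂Measure.pi m₁ := by
    rw [← hmap₁, integral_map (measurable_pi_lambda _ hXmeas₁).aemeasurable
      hg.aestronglyMeasurable]
    refine integral_congr_ae (Filter.Eventually.of_forall fun ω => ?_)
    rw [hgdef]
    unfold gRev twoPriceRev
    refine singleItemRev_congr b T (fun s hs => ?_) (fun s hs => ?_) <;>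
      · unfold coordFn
        simp only [dif_pos hs]
        rfl
  have hIR : ∫ ω, twoPriceRev b pH pL T (fun s => A' s ω) (fun s => QH' s ω)
        (fun s => QL' s ω) ∂μ₂ = ∫ x, g x ∂Measure.pi m₂ := by
    rw [← hmap₂, integral_map (measurable_pi_lambda _ hXmeas₂).aemeasurable
      hg.aestronglyMeasurable]
    refine integral_congr_ae (Filter.Eventually.of_forall fun ω => ?_)
    rw [hgdef]
    unfold gRev twoPriceRev
    refine singleItemRev_congr b T (fun s hs => ?_) (fun s hs => ?_) <;>
      · unfold coordFn
        simp only [dif_pos hs]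
        rfl
  rw [hIL, hIR]
  -- the two distinguished coordinates
  set i₀ : Fin T × Fin 3 := (⟨t, htT⟩, 0) with hi₀
  set i₁ : Fin T × Fin 3 := (⟨t + 1, ht⟩, 0) with hi₁
  have hne : i₀ ≠ i₁ := by
    simp only [hi₀, hi₁, Prod.mk.injEq, Fin.mk.injEq, ne_eq]
    omega
  have hm₁i₀ : m₁ i₀ = bern (v t) := by simp [hm₁, hi₀]
  have hm₁i₁ : m₁ i₁ = bern (v (t + 1)) := by simp [hm₁, hi₁]
  have hm₂i₀ : m₂ i₀ = bern (v (t + 1)) := by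
    simp only [hm₂, hi₀, hσdef]
    rw [if_pos trivial, Equiv.swap_apply_left]
  have hm₂i₁ : m₂ i₁ = bern (v t) := by
    simp only [hm₂, hi₁, hσdef]
    rw [if_pos trivial, Equiv.swap_apply_right]
  have hupd : ∀ a c : ℝ, upd2 m₂ i₀ i₁ a c = upd2 m₁ i₀ i₁ a c := by
    intro a c
    funext i
    rcases eq_or_ne i i₁ with rfl | h1
    · rw [upd2_at1, upd2_at1]
    rcases eq_or_ne i i₀ with rfl | h0
    · rw [upd2_at0 m₁ hne, upd2_at0 m₂ hne]
    · rw [upd2_other m₁ h0 h1, upd2_other m₂ h0 h1]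
      rcases i with ⟨a', j⟩
      rcases eq_or_ne j 0 with rfl | hj
      · have hne_t : (a' : ℕ) ≠ t := by
          intro hc
          exact h0 (by rw [hi₀]; exact Prod.ext (Fin.ext hc) rfl)
        have hne_t1 : (a' : ℕ) ≠ t + 1 := by
          intro hc
          exact h1 (by rw [hi₁]; exact Prod.ext (Fin.ext hc) rfl)
        simp only [hm₁, hm₂, hσdef]
        rw [if_pos trivial, if_pos trivial, Equiv.swap_apply_of_ne_of_ne hne_t hne_t1]
      · simp only [hm₁, hm₂]
        rw [if_neg hj, if_neg hj]
  -- supports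
  have hmsupp : ∀ i, m₁ i (Set.Icc (0:ℝ) 1)ᶜ = 0 := by
    rintro ⟨a, j⟩
    fin_cases j
    · exact (by simp [hm₁] : m₁ (a, 0) = bern (v a)) ▸ bern_compl_Icc (v a)
    · exact (by simp [hm₁] : m₁ (a, 1) = FH) ▸ hFH
    · exact (by simp [hm₁] : m₁ (a, 2) = FL) ▸ hFL
  have hdsupp : ∀ c : ℝ, c ∈ Set.Icc (0:ℝ) 1 → Measure.dirac c (Set.Icc (0:ℝ) 1)ᶜ = 0 := by
    intro c hc
    rw [Measure.dirac_apply' _ measurableSet_Icc.compl,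
      Set.indicator_of_notMem (by simpa using hc)]
  have hsupp2 : ∀ a c : ℝ, a ∈ Set.Icc (0:ℝ) 1 → c ∈ Set.Icc (0:ℝ) 1 →
      ∀ i, upd2 m₁ i₀ i₁ a c i (Set.Icc (0:ℝ) 1)ᶜ = 0 := by
    intro a c ha hc i
    rcases eq_or_ne i i₁ with rfl | h1
    · rw [upd2_at1]; exact hdsupp c hc
    rcases eq_or_ne i i₀ with rfl | h0
    · rw [upd2_at0 m₁ hne]; exact hdsupp a ha
    · rw [upd2_other m₁ h0 h1]; exact hmsupp i
  haveI hupd2p : ∀ (a c : ℝ) i, IsProbabilityMeasure (upd2 m₁ i₀ i₁ a c i) :=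
    fun a c i => upd2_prob m₁ i₀ i₁ a c i
  have h0m : (0:ℝ) ∈ Set.Icc (0:ℝ) 1 := by norm_num
  have h1m : (1:ℝ) ∈ Set.Icc (0:ℝ) 1 := by norm_num
  have hint : ∀ a c : ℝ, a ∈ Set.Icc (0:ℝ) 1 → c ∈ Set.Icc (0:ℝ) 1 →
      Integrable g (Measure.pi (upd2 m₁ i₀ i₁ a c)) := by
    intro a c ha hc
    haveI := hupd2p a c
    exact integrable_gRev hpL hpHL T _ (hsupp2 a c ha hc)
  -- the four elementary integrals
  set I00 := ∫ x, g x ∂Measure.pi (upd2 m₁ i₀ i₁ 0 0) with hI00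
  set I01 := ∫ x, g x ∂Measure.pi (upd2 m₁ i₀ i₁ 0 1) with hI01
  set I10 := ∫ x, g x ∂Measure.pi (upd2 m₁ i₀ i₁ 1 0) with hI10
  set I11 := ∫ x, g x ∂Measure.pi (upd2 m₁ i₀ i₁ 1 1) with hI11
  have hnetop : ∀ r s' : ℝ, ENNReal.ofReal r * ENNReal.ofReal s' ≠ ⊤ :=
    fun r s' => ENNReal.mul_ne_top ENNReal.ofReal_ne_top ENNReal.ofReal_ne_top
  have hcalc : ∀ (mm : Fin T × Fin 3 → Measure ℝ), (∀ i, IsProbabilityMeasure (mm i)) →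
      ∀ p q : ℝ, p ∈ Set.Icc (0:ℝ) 1 → q ∈ Set.Icc (0:ℝ) 1 →
      mm i₀ = bern p → mm i₁ = bern q →
      (∀ a c : ℝ, upd2 mm i₀ i₁ a c = upd2 m₁ i₀ i₁ a c) →
      ∫ x, g x ∂Measure.pi mm
        = (1 - p) * (1 - q) * I00 + (1 - p) * q * I01 + p * (1 - q) * I10 + p * q * I11 := by
    intro mm hmm p q hp hq hb0 hb1 hu
    haveI := hmm
    rw [pi_bern_decomp mm i₀ i₁ hne p q hb0 hb1, hu 0 0, hu 0 1, hu 1 0, hu 1 1,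
      integral_four_smul g _ _ _ _ (hnetop _ _) (hnetop _ _) (hnetop _ _) (hnetop _ _)
        _ _ _ _ (hint 0 0 h0m h0m) (hint 0 1 h0m h1m) (hint 1 0 h1m h0m) (hint 1 1 h1m h1m)]
    rw [ENNReal.toReal_mul, ENNReal.toReal_mul, ENNReal.toReal_mul, ENNReal.toReal_mul,
      ENNReal.toReal_ofReal (by linarith [hp.2] : (0:ℝ) ≤ 1 - p),
      ENNReal.toReal_ofReal (by linarith [hq.2] : (0:ℝ) ≤ 1 - q),
      ENNReal.toReal_ofReal hp.1, ENNReal.toReal_ofReal hq.1]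
  have hEL := hcalc m₁ hm₁p (v t) (v (t + 1)) (hv t htT) (hv _ ht) hm₁i₀ hm₁i₁ fun _ _ => rfl
  have hER := hcalc m₂ hm₂p (v (t + 1)) (v t) (hv _ ht) (hv t htT) hm₂i₀ hm₂i₁ hupd
  rw [hEL, hER]
  -- the exchange inequality I01 ≤ I10
  set eF : (Fin T × Fin 3) ≃ (Fin T × Fin 3) :=
    (Equiv.swap (⟨t, htT⟩ : Fin T) ⟨t + 1, ht⟩).prodCongr (Equiv.refl (Fin 3)) with hedef
  have heapp : ∀ (a : Fin T) (j : Fin 3),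
      eF (a, j) = (Equiv.swap ⟨t, htT⟩ ⟨t + 1, ht⟩ a, j) := fun a j => rfl
  have heinv : ∀ i, eF (eF i) = i := by
    rintro ⟨a, j⟩
    rw [heapp, heapp, Equiv.swap_apply_self]
  have hfam : (fun i => upd2 m₁ i₀ i₁ 0 1 (eF i)) = upd2 m₁ i₀ i₁ 1 0 := by
    funext i
    rcases eq_or_ne i i₀ with rfl | h0
    · have he0 : eF i₀ = i₁ := by
        rw [hi₀, hi₁, heapp, Equiv.swap_apply_left]
      rw [he0, upd2_at1, upd2_at0 m₁ hne]
    rcases eq_or_ne i i₁ with rfl | h1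
    · have he1 : eF i₁ = i₀ := by
        rw [hi₀, hi₁, heapp, Equiv.swap_apply_right]
      rw [he1, upd2_at0 m₁ hne, upd2_at1]
    · rcases i with ⟨a, j⟩
      rcases eq_or_ne j 0 with rfl | hj
      · have ha0 : a ≠ ⟨t, htT⟩ := fun hc => h0 (by rw [hi₀, hc])
        have ha1 : a ≠ ⟨t + 1, ht⟩ := fun hc => h1 (by rw [hi₁, hc])
        rw [heapp, Equiv.swap_apply_of_ne_of_ne ha0 ha1,
          upd2_other m₁ h0 h1, upd2_other m₁ h0 h1]
      · have h0' : ((Equiv.swap (⟨t, htT⟩ : Fin T) ⟨t + 1, ht⟩ a, j) : Fin T × Fin 3) ≠ i₀ := by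
          rw [hi₀]; intro hc; exact hj (congrArg Prod.snd hc)
        have h1' : ((Equiv.swap (⟨t, htT⟩ : Fin T) ⟨t + 1, ht⟩ a, j) : Fin T × Fin 3) ≠ i₁ := by
          rw [hi₁]; intro hc; exact hj (congrArg Prod.snd hc)
        rw [heapp, upd2_other m₁ h0' h1', upd2_other m₁ h0 h1]
        simp only [hm₁]
        rw [if_neg hj, if_neg hj]
  haveI hP01 : ∀ i, IsProbabilityMeasure (upd2 m₁ i₀ i₁ 0 1 i) := hupd2p 0 1
  haveI hP10 : ∀ i, IsProbabilityMeasure (upd2 m₁ i₀ i₁ 1 0 i) := hupd2p 1 0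
  set ψ := MeasurableEquiv.piCongrLeft (fun _ : Fin T × Fin 3 => ℝ) eF with hψdef
  have hMP : MeasurePreserving ψ
      (Measure.pi (upd2 m₁ i₀ i₁ 1 0)) (Measure.pi (upd2 m₁ i₀ i₁ 0 1)) := by
    have h := measurePreserving_piCongrLeft (fun i => upd2 m₁ i₀ i₁ 0 1 i) eF
    rwa [hfam] at h
  have hψapp : ∀ (x : Fin T × Fin 3 → ℝ) i, ψ x i = x (eF i) := by
    intro x i
    conv_lhs => rw [← heinv i]
    rw [hψdef, MeasurableEquiv.coe_piCongrLeft]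
    exact Equiv.piCongrLeft_apply_apply (fun _ => ℝ) eF x (eF i)
  have hIcomp : I01 = ∫ x, g (ψ x) ∂Measure.pi (upd2 m₁ i₀ i₁ 1 0) :=
    (hMP.integral_comp ψ.measurableEmbedding g).symm
  -- pointwise exchange
  have hptwise : ∀ x : Fin T × Fin 3 → ℝ,
      (∀ i, x i ∈ Set.Icc (0:ℝ) 1) → x i₀ = 1 → x i₁ = 0 → g (ψ x) ≤ g x := by
    intro x hx hx0 hx1
    have hcoord : ∀ (j : Fin 3) (s : ℕ), coordFn T j (ψ x) s = coordFn T j x (σ s) := by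
      intro j s
      by_cases hs : s < T
      · have hσs : σ s < T := by
          rcases eq_or_ne s t with rfl | h1
          · rw [hσdef, Equiv.swap_apply_left]; omega
          rcases eq_or_ne s (t + 1) with rfl | h2
          · rw [hσdef, Equiv.swap_apply_right]; omega
          · rw [hσdef, Equiv.swap_apply_of_ne_of_ne h1 h2]; exact hs
        have hval : (((Equiv.swap (⟨t, htT⟩ : Fin T) ⟨t + 1, ht⟩) ⟨s, hs⟩ : Fin T) : ℕ)
            = σ s := by
          rcases eq_or_ne s t with rfl | h1
          · rw [show (⟨s, hs⟩ : Fin T) = ⟨s, htT⟩ from rfl, Equiv.swap_apply_left, hσdef,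
              Equiv.swap_apply_left]
          rcases eq_or_ne s (t + 1) with rfl | h2
          · rw [show (⟨t + 1, hs⟩ : Fin T) = ⟨t + 1, ht⟩ from rfl, Equiv.swap_apply_right, hσdef,
              Equiv.swap_apply_right]
          · rw [hσdef, Equiv.swap_apply_of_ne_of_ne h1 h2,
              Equiv.swap_apply_of_ne_of_ne (Fin.ne_of_val_ne h1) (Fin.ne_of_val_ne h2)]
        unfold coordFn
        rw [dif_pos hs, dif_pos hσs, hψapp, heapp]
        exact congrArg x (Prod.ext (Fin.ext hval) rfl)
      · have hσs : ¬ σ s < T := by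
          rw [hσdef, Equiv.swap_apply_of_ne_of_ne (by omega) (by omega)]; exact hs
        unfold coordFn
        rw [dif_neg hs, dif_neg hσs]
    have hg1 : g (ψ x) = singleItemRev b T
        (fun s => coordFn T 0 x (σ s) * pH + (1 - coordFn T 0 x (σ s)) * pL)
        (fun s => coordFn T 0 x (σ s) * coordFn T 1 x (σ s)
          + (1 - coordFn T 0 x (σ s)) * coordFn T 2 x (σ s)) := by
      rw [hgdef]
      unfold gRev twoPriceRev
      refine singleItemRev_congr b T (fun s _ => ?_) (fun s _ => ?_) <;>
        simp only [hcoord]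
    have hc0t : coordFn T 0 x t = 1 := by
      unfold coordFn
      rw [dif_pos htT]
      exact hx0
    have hc0t1 : coordFn T 0 x (t + 1) = 0 := by
      unfold coordFn
      rw [dif_pos ht]
      exact hx1
    rw [hg1, hgdef]
    unfold gRev twoPriceRev
    rw [hσdef]
    refine exchange_det b T t ht
      (fun u => coordFn T 0 x u * pH + (1 - coordFn T 0 x u) * pL)
      (fun u => coordFn T 0 x u * coordFn T 1 x u + (1 - coordFn T 0 x u) * coordFn T 2 x u)
      (fun s => ?_) ?_
    · by_cases hs : s < T
      · have ha := hx (⟨s, hs⟩, 0)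
        have hh := hx (⟨s, hs⟩, 1)
        have hl := hx (⟨s, hs⟩, 2)
        unfold coordFn
        simp only [dif_pos hs]
        nlinarith [ha.1, ha.2, hh.1, hh.2, hl.1, hl.2]
      · unfold coordFn
        simp only [dif_neg hs]
        norm_num
    · simp only [hc0t, hc0t1]
      ring_nf
      linarith
  have hkey : I01 ≤ I10 := by
    rw [hIcomp, hI10]
    refine integral_mono_ae ?_ (hint 1 0 h1m h0m) ?_
    · have h := (hMP.integrable_comp_emb ψ.measurableEmbedding).2 (hint 0 1 h0m h1m)
      exact h
    · filter_upwards [ae_pi_mem (upd2 m₁ i₀ i₁ 1 0) (fun _ => Set.Icc 0 1) (hsupp2 1 0 h1m h0m),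
        ae_pi_eq (upd2 m₁ i₀ i₁ 1 0) (upd2_at0 m₁ hne 1 0),
        ae_pi_eq (upd2 m₁ i₀ i₁ 1 0) (upd2_at1 m₁ i₀ i₁ 1 0)] with x hxm hx0 hx1
      exact hptwise x hxm hx0 hx1
  nlinarith [mul_nonneg (sub_nonneg.2 hvt.le) (sub_nonneg.2 hkey),
    (hv t htT).1, (hv t htT).2, (hv _ ht).1, (hv _ ht).2]
end

section
/- Single-item non-stationary pricing with a bid-price calendar. Let T and m be positive integers, b ≥ 1 a real number, prices p_1, …, p_m > 0, and mean demands q_{t,j} ∈ [0,1] for t ∈ {1,…,T} and j ∈ {1,…,m}. Let x_{t,j} ≥ 0 be a DLP-N feasible solution and set r* = Σ_{t=1}^T Σ_{j=1}^m p_j q_{t,j} x_{t,j} and c = r*/(2b). Suppose that for each t an index j_t satisfies p_{j_t} ≥ c and (p_{j_t} − c)·q_{t,j_t} ≥ (p_j − c)·q_{t,j} for every j ∈ {1,…,m}. Let Q_1, …, Q_T be independent random variables taking values in [0,1] with E[Q_t] = q_{t,j_t}. Then the static calendar offering price p_{j_t} in period t satisfies E[Rev] = E[Σ_{t=1}^T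 p_{j_t}·(min(b, S_t) − min(b, S_{t−1}))] ≥ r*/2. -/
open MeasureTheory ProbabilityTheory

/-- Single-item revenue with inventory truncation: with initial inventory `b`, per-period prices
`P 0, …, P (T-1)` and demands `Q 0, …, Q (T-1)` (periods indexed from `0`), the revenue is
`Σ_t P t · (min b S_{t+1} − min b S_t)` where `S_t = Q 0 + ⋯ + Q (t-1)`. -/
lemma key_pointwise_s16 (b qv s : ℝ) (hb : 1 ≤ b) (hq0 : 0 ≤ qv) (hq1 : qv ≤ 1) (hs : 0 ≤ s) :
    qv * (1 - min b s / b) ≤ min b (s + qv) - min b s := by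
  have hb0 : (0:ℝ) < b := lt_of_lt_of_le one_pos hb
  rcases le_total b s with h | h
  · rw [min_eq_left h, min_eq_left (le_trans h (by linarith))]
    have : b / b = 1 := div_self hb0.ne'
    rw [this]; ring_nf; simp
  · rw [min_eq_right h]
    rcases le_total (s + qv) b with h2 | h2
    · rw [min_eq_right h2]
      have h3 : 0 ≤ s / b := div_nonneg hs hb0.le
      nlinarith
    · rw [min_eq_left h2]
      have h3 : qv * (1 - s / b) * b = qv * (b - s) := by field_simp
      nlinarith [h3, mul_nonneg hq0 (sub_nonneg.2 h), sub_nonneg.2 h]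

/-- single-item non-stationary pricing with a bid-price calendar.  Prices are
indexed by `j ∈ {1,…,m}`, periods by `t ∈ {0,…,T-1}`.  Given a DLP-N feasible solution `x` with
value `r* = Σ_{t,j} p_j q_{t,j} x_{t,j}` and bid price `c = r*/(2b)`, if in each period `t` the
offered price index `j_t` satisfies `p_{j_t} ≥ c` and maximizes `(p_j − c)·q_{t,j}`, then the
resulting static calendar earns expected revenue at least `r*/2`. -/
theorem stmt_16 {Ω : Type*} [MeasurableSpace Ω] (μ : Measure Ω) [IsProbabilityMeasure μ]
    (T m : ℕ) (hT : 0 < T) (hm : 0 < m) (b : ℝ) (hb : 1 ≤ b)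
    (p : ℕ → ℝ) (hp : ∀ j ∈ Finset.Icc 1 m, 0 < p j)
    (q : ℕ → ℕ → ℝ) (hq : ∀ t, t < T → ∀ j ∈ Finset.Icc 1 m, q t j ∈ Set.Icc (0 : ℝ) 1)
    (x : ℕ → ℕ → ℝ) (hx : ∀ t, t < T → ∀ j ∈ Finset.Icc 1 m, 0 ≤ x t j)
    (hxfeas : ∀ t, t < T → ∑ j ∈ Finset.Icc 1 m, x t j ≤ 1)
    (hxinv : ∑ t ∈ Finset.range T, ∑ j ∈ Finset.Icc 1 m, q t j * x t j ≤ b)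
    (r : ℝ) (hr : r = ∑ t ∈ Finset.range T, ∑ j ∈ Finset.Icc 1 m, p j * q t j * x t j)
    (jt : ℕ → ℕ) (hjt : ∀ t, t < T → jt t ∈ Finset.Icc 1 m)
    (hthresh : ∀ t, t < T → r / (2 * b) ≤ p (jt t))
    (hargmax : ∀ t, t < T → ∀ j ∈ Finset.Icc 1 m,
      (p j - r / (2 * b)) * q t j ≤ (p (jt t) - r / (2 * b)) * q t (jt t))
    (Q : ℕ → Ω → ℝ) (hQmeas : ∀ t, t < T → Measurable (Q t))
    (hQindep : iIndepFun (fun i : Fin T => Q i) μ)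
    (hQrange : ∀ t, t < T → ∀ ω, Q t ω ∈ Set.Icc (0 : ℝ) 1)
    (hQmean : ∀ t, t < T → ∫ ω, Q t ω ∂μ = q t (jt t)) :
    r / 2 ≤ ∫ ω, singleItemRev b T (fun t => p (jt t)) (fun t => Q t ω) ∂μ := by
  classical
  have hb0 : (0:ℝ) < b := lt_of_lt_of_le one_pos hb
  set c : ℝ := r / (2 * b) with hc
  set S : ℕ → Ω → ℝ := fun t ω => ∑ s ∈ Finset.range t, Q s ω with hSdef
  set W : ℕ → Ω → ℝ := fun t ω => min b (S t ω) with hWdef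
  -- basic pointwise facts
  have hSnonneg : ∀ t, t ≤ T → ∀ ω, 0 ≤ S t ω := fun t ht ω =>
    Finset.sum_nonneg fun s hs =>
      (hQrange s (lt_of_lt_of_le (Finset.mem_range.1 hs) ht) ω).1
  have hSmono : ∀ t, t ≤ T → ∀ ω, S t ω ≤ S T ω := fun t ht ω =>
    Finset.sum_le_sum_of_subset_of_nonneg
      (Finset.range_subset_range.2 ht)
      (fun s hs _ => (hQrange s (Finset.mem_range.1 hs) ω).1)
  have hWnonneg : ∀ t, t ≤ T → ∀ ω, 0 ≤ W t ω := fun t ht ω =>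
    le_min hb0.le (hSnonneg t ht ω)
  have hWle : ∀ t, ∀ ω, W t ω ≤ b := fun t ω => min_le_left _ _
  have hWmono : ∀ t, t ≤ T → ∀ ω, W t ω ≤ W T ω := fun t ht ω =>
    min_le_min le_rfl (hSmono t ht ω)
  -- measurability and integrability
  have hSmeas : ∀ t, t ≤ T → Measurable (S t) := fun t ht =>
    Finset.measurable_sum _ fun s hs =>
      hQmeas s (lt_of_lt_of_le (Finset.mem_range.1 hs) ht)
  have hWmeas : ∀ t, t ≤ T → Measurable (W t) := fun t ht =>
    measurable_const.min (hSmeas t ht)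
  have hWint : ∀ t, t ≤ T → Integrable (W t) μ := fun t ht =>
    (integrable_const b).mono' (hWmeas t ht).aestronglyMeasurable
      (ae_of_all _ fun ω => by
        rw [Real.norm_eq_abs, abs_le]
        exact ⟨le_trans (by linarith) (hWnonneg t ht ω), hWle t ω⟩)
  have hQint : ∀ t, t < T → Integrable (Q t) μ := fun t ht =>
    (integrable_const (1:ℝ)).mono' (hQmeas t ht).aestronglyMeasurable
      (ae_of_all _ fun ω => by
        rw [Real.norm_eq_abs, abs_le]
        exact ⟨le_trans (by linarith) (hQrange t ht ω).1, (hQrange t ht ω).2⟩)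
  have hQWint : ∀ t, t < T → Integrable (fun ω => Q t ω * W t ω) μ := fun t ht =>
    (integrable_const b).mono' (((hQmeas t ht).mul (hWmeas t ht.le)).aestronglyMeasurable)
      (ae_of_all _ fun ω => by
        rw [Real.norm_eq_abs, abs_mul,
          abs_of_nonneg (hQrange t ht ω).1, abs_of_nonneg (hWnonneg t ht.le ω)]
        calc Q t ω * W t ω ≤ 1 * b :=
              mul_le_mul (hQrange t ht ω).2 (hWle t ω) (hWnonneg t ht.le ω) zero_le_one
          _ = b := one_mul b)
  set I : ℕ → ℝ := fun t => ∫ ω, W t ω ∂μ with hIdef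
  -- independence key step
  have hkey : ∀ t, t < T → ∫ ω, Q t ω * W t ω ∂μ = q t (jt t) * I t := by
    intro t ht
    have hlt : ∀ s ∈ Finset.range t, s < T := fun s hs =>
      lt_trans (Finset.mem_range.1 hs) ht
    set F : Finset (Fin T) := (Finset.range t).attachFin hlt with hF
    have hnm : (⟨t, ht⟩ : Fin T) ∉ F := by
      simp [hF, Finset.mem_attachFin]
    have hind : IndepFun (∑ j ∈ F, (fun i : Fin T => Q i) j) (Q t) μ := by
      have := hQindep.indepFun_finsetSum_of_notMem (fun i => hQmeas i i.isLt) hnm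
      exact this
    have hsum : (∑ j ∈ F, (fun i : Fin T => Q i) j) = S t := by
      funext ω
      show (∑ j ∈ F, (fun i : Fin T => Q i) j) ω = _
      rw [Finset.sum_apply]
      exact Finset.sum_nbij' (fun a => (a : ℕ)) (fun a => if h : a < T then ⟨a, h⟩ else ⟨t, ht⟩)
        (fun a ha => by simpa [hF, Finset.mem_attachFin] using ha)
        (fun a ha => by
          have := Finset.mem_range.1 ha
          simp [hF, Finset.mem_attachFin, dif_pos (hlt a ha), ha])
        (fun a ha => by
          have h1 : (a : ℕ) < T := a.isLt
          simp [dif_pos h1])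
        (fun a ha => by
          have := hlt a ha
          simp [dif_pos this])
        (fun a ha => rfl)
    rw [hsum] at hind
    have hind2 : IndepFun (Q t) (W t) μ := by
      have := hind.comp (φ := fun y : ℝ => min b y) (ψ := id)
        (measurable_const.min measurable_id) measurable_id
      have h2 : ((fun y => min b y) ∘ S t) = W t := rfl
      rw [h2] at this
      exact (this.symm.comp measurable_id measurable_id)
    have := hind2.integral_mul_eq_mul_integral (hQmeas t ht).aestronglyMeasurable
      (hWmeas t ht.le).aestronglyMeasurable
    simpa [hQmean t ht, hIdef, Pi.mul_apply] using this
  -- monotonicity of I and bounds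
  have hImono : ∀ t, t ≤ T → I t ≤ I T := fun t ht =>
    integral_mono (hWint t ht) (hWint T le_rfl) (hWmono t ht)
  have hIT0 : 0 ≤ I T := integral_nonneg (hWnonneg T le_rfl)
  have hITb : I T ≤ b := by
    calc I T ≤ ∫ _, b ∂μ := integral_mono (hWint T le_rfl) (integrable_const b) (hWle T)
      _ = b := by simp
  set u : ℝ := I T / b with hu
  have hu0 : 0 ≤ u := div_nonneg hIT0 hb0.le
  have hu1 : u ≤ 1 := (div_le_one hb0).2 hITb
  -- key estimate
  have hstep : ∀ t, t < T → q t (jt t) * (1 - u) ≤ I (t + 1) - I t := by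
    intro t ht
    have hpt : ∀ ω, Q t ω * (1 - W t ω / b) ≤ W (t + 1) ω - W t ω := by
      intro ω
      have h1 : S (t + 1) ω = S t ω + Q t ω := Finset.sum_range_succ _ _
      have := key_pointwise_s16 b (Q t ω) (S t ω) hb (hQrange t ht ω).1 (hQrange t ht ω).2
        (hSnonneg t ht.le ω)
      simpa [hWdef, h1] using this
    have hlhs_int : Integrable (fun ω => Q t ω * (1 - W t ω / b)) μ := by
      have : (fun ω => Q t ω * (1 - W t ω / b))
          = fun ω => Q t ω - (Q t ω * W t ω) / b := by
        funext ω; field_simp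
      rw [this]
      exact (hQint t ht).sub ((hQWint t ht).div_const b)
    have hmono := integral_mono hlhs_int ((hWint (t+1) ht).sub (hWint t ht.le))
      hpt
    have hcompute : ∫ ω, Q t ω * (1 - W t ω / b) ∂μ = q t (jt t) * (1 - I t / b) := by
      have heq : (fun ω => Q t ω * (1 - W t ω / b))
          = fun ω => Q t ω - (Q t ω * W t ω) / b := by
        funext ω; field_simp
      rw [heq, integral_sub (hQint t ht) ((hQWint t ht).div_const b),
        integral_div, hkey t ht, hQmean t ht]
      field_simp
    have hIt : I t ≤ I T := hImono t ht.le
    have hq0 : 0 ≤ q t (jt t) := (hq t ht (jt t) (hjt t ht)).1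
    have h2 : q t (jt t) * (1 - u) ≤ q t (jt t) * (1 - I t / b) := by
      apply mul_le_mul_of_nonneg_left _ hq0
      have : I t / b ≤ u := (div_le_div_iff_of_pos_right hb0).2 hIt
      linarith
    calc q t (jt t) * (1 - u) ≤ q t (jt t) * (1 - I t / b) := h2
      _ = ∫ ω, Q t ω * (1 - W t ω / b) ∂μ := hcompute.symm
      _ ≤ ∫ ω, (W (t+1) ω - W t ω) ∂μ := hmono
      _ = I (t+1) - I t := integral_sub (hWint (t+1) ht) (hWint t ht.le)
  -- integral of revenue
  have hRevint : ∀ t ∈ Finset.range T,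
      Integrable (fun ω => p (jt t) * (W (t + 1) ω - W t ω)) μ := fun t ht =>
    ((hWint (t + 1) (Finset.mem_range.1 ht)).sub
      (hWint t (Finset.mem_range.1 ht).le)).const_mul _
  have hRev : ∫ ω, singleItemRev b T (fun t => p (jt t)) (fun t => Q t ω) ∂μ
      = ∑ t ∈ Finset.range T, p (jt t) * (I (t + 1) - I t) := by
    have heq : (fun ω => singleItemRev b T (fun t => p (jt t)) (fun t => Q t ω))
        = fun ω => ∑ t ∈ Finset.range T, p (jt t) * (W (t + 1) ω - W t ω) := rfl
    rw [heq, integral_finset_sum _ hRevint]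
    refine Finset.sum_congr rfl fun t ht => ?_
    have h1 := Finset.mem_range.1 ht
    rw [MeasureTheory.integral_const_mul, integral_sub (hWint (t + 1) h1) (hWint t h1.le)]
  have hI0 : I 0 = 0 := by
    have hW0 : W 0 = fun _ : Ω => (0 : ℝ) := by
      funext ω
      simp [hWdef, hSdef, min_eq_right hb0.le]
    simp only [hIdef, hW0, integral_zero]
  have hdecomp : ∑ t ∈ Finset.range T, p (jt t) * (I (t + 1) - I t)
      = (∑ t ∈ Finset.range T, (p (jt t) - c) * (I (t + 1) - I t)) + c * I T := by
    have htel : ∑ t ∈ Finset.range T, (I (t + 1) - I t) = I T - I 0 :=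
      Finset.sum_range_sub I T
    have h2 : ∑ t ∈ Finset.range T, p (jt t) * (I (t + 1) - I t)
        = ∑ t ∈ Finset.range T,
            ((p (jt t) - c) * (I (t + 1) - I t) + c * (I (t + 1) - I t)) :=
      Finset.sum_congr rfl fun t _ => by ring
    rw [h2, Finset.sum_add_distrib, ← Finset.mul_sum, htel, hI0]
    ring
  have hr0 : 0 ≤ r := by
    rw [hr]
    refine Finset.sum_nonneg fun t ht => Finset.sum_nonneg fun j hj => ?_
    have h1 := Finset.mem_range.1 ht
    exact mul_nonneg (mul_nonneg (hp j hj).le (hq t h1 j hj).1) (hx t h1 j hj)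
  have hc0 : 0 ≤ c := div_nonneg hr0 (by linarith)
  have hcb : c * b = r / 2 := by
    rw [hc]; field_simp
  have hlp : ∀ t, t < T → ∑ j ∈ Finset.Icc 1 m, (p j - c) * q t j * x t j
      ≤ (p (jt t) - c) * q t (jt t) := by
    intro t ht
    have hmax0 : 0 ≤ (p (jt t) - c) * q t (jt t) :=
      mul_nonneg (by linarith [hthresh t ht]) (hq t ht (jt t) (hjt t ht)).1
    calc ∑ j ∈ Finset.Icc 1 m, (p j - c) * q t j * x t j
        ≤ ∑ j ∈ Finset.Icc 1 m, (p (jt t) - c) * q t (jt t) * x t j :=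
          Finset.sum_le_sum fun j hj =>
            mul_le_mul_of_nonneg_right (hargmax t ht j hj) (hx t ht j hj)
      _ = (p (jt t) - c) * q t (jt t) * ∑ j ∈ Finset.Icc 1 m, x t j := by
          rw [Finset.mul_sum]
      _ ≤ (p (jt t) - c) * q t (jt t) * 1 :=
          mul_le_mul_of_nonneg_left (hxfeas t ht) hmax0
      _ = _ := mul_one _
  have hX : r / 2 ≤ ∑ t ∈ Finset.range T, ∑ j ∈ Finset.Icc 1 m,
      (p j - c) * q t j * x t j := by
    have heq2 : ∑ t ∈ Finset.range T, ∑ j ∈ Finset.Icc 1 m, (p j - c) * q t j * x t j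
        = r - c * ∑ t ∈ Finset.range T, ∑ j ∈ Finset.Icc 1 m, q t j * x t j := by
      rw [hr, Finset.mul_sum, ← Finset.sum_sub_distrib]
      refine Finset.sum_congr rfl fun t _ => ?_
      rw [Finset.mul_sum, ← Finset.sum_sub_distrib]
      exact Finset.sum_congr rfl fun j _ => by ring
    rw [heq2]
    have h3 := mul_le_mul_of_nonneg_left hxinv hc0
    linarith [hcb]
  have hsum1 : (1 - u) * (r / 2)
      ≤ ∑ t ∈ Finset.range T, (p (jt t) - c) * (I (t + 1) - I t) := by
    calc (1 - u) * (r / 2)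
        ≤ (1 - u) * ∑ t ∈ Finset.range T, ∑ j ∈ Finset.Icc 1 m,
            (p j - c) * q t j * x t j :=
          mul_le_mul_of_nonneg_left hX (by linarith)
      _ ≤ (1 - u) * ∑ t ∈ Finset.range T, (p (jt t) - c) * q t (jt t) :=
          mul_le_mul_of_nonneg_left
            (Finset.sum_le_sum fun t ht => hlp t (Finset.mem_range.1 ht))
            (by linarith)
      _ = ∑ t ∈ Finset.range T, (p (jt t) - c) * (q t (jt t) * (1 - u)) := by
          rw [Finset.mul_sum]
          exact Finset.sum_congr rfl fun t _ => by ring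
      _ ≤ ∑ t ∈ Finset.range T, (p (jt t) - c) * (I (t + 1) - I t) :=
          Finset.sum_le_sum fun t ht =>
            mul_le_mul_of_nonneg_left (hstep t (Finset.mem_range.1 ht))
              (by linarith [hthresh t (Finset.mem_range.1 ht)])
  have hcIT : c * I T = r / 2 * u := by
    rw [hu, hc]
    field_simp
  rw [hRev, hdecomp]
  have hring : (1 - u) * (r / 2) = r / 2 - r / 2 * u := by ring
  linarith [hsum1, hcIT]
end
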